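/- For every n ≥ 0, the number of monotone set partitions of [n] equals the number of non-overlapping set partitions of [n] (the n-th Bessel number B*_n). -/

import Mathlib

/-- `P` is a set partition of `{1, …, n}` (realised as `Fin n`). -/
def IsSetPartition (n : ℕ) (P : Finset (Finset (Fin n))) : Prop :=
  (∀ A ∈ P, A.Nonempty) ∧
  (∀ A ∈ P, ∀ B ∈ P, A ≠ B → Disjoint A B) ∧
  (∀ x : Fin n, ∃ A ∈ P, x ∈ A)

/-- `P` is a monotone set partition: for any two distinct non-singleton blocks
`A` and `B`, `min A < min B` if and only if `max A < max B`. -/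
def IsMonotonePartition (n : ℕ) (P : Finset (Finset (Fin n))) : Prop :=
  IsSetPartition n P ∧
  ∀ A ∈ P, ∀ B ∈ P, A ≠ B → 2 ≤ A.card → 2 ≤ B.card →
    ∀ (hA : A.Nonempty) (hB : B.Nonempty),
      (A.min' hA < B.min' hB ↔ A.max' hA < B.max' hB)

/-- `P` is a non-overlapping set partition: there are no two blocks `A`, `B` with
`min A < min B < max A < max B`. -/
def IsNonOverlappingPartition (n : ℕ) (P : Finset (Finset (Fin n))) : Prop :=
  IsSetPartition n P ∧
  ∀ A ∈ P, ∀ B ∈ P, ∀ (hA : A.Nonempty) (hB : B.Nonempty),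
    ¬ (A.min' hA < B.min' hB ∧ B.min' hB < A.max' hA ∧ A.max' hA < B.max' hB)

namespace MonNov

inductive Step where
  | sing : Step
  | op : Step
  | cl : Step
  | ins : ℕ → Step
deriving DecidableEq

def validFrom : ℕ → List Step → Prop
  | j, [] => j = 0
  | j, Step.sing :: t => validFrom j t
  | j, Step.op :: t => validFrom (j+1) t
  | j, Step.cl :: t => 0 < j ∧ validFrom (j-1) t
  | j, Step.ins k :: t => k < j ∧ validFrom j t

variable {n : ℕ}

structure St (n : ℕ) where
  opens : List (Finset (Fin n))
  done : Finset (Finset (Fin n))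

def doStep (mode : Bool) (x : Fin n) : Step → St n → St n
  | .sing, ⟨o, d⟩ => ⟨o, insert {x} d⟩
  | .op, ⟨o, d⟩ => ⟨o ++ [{x}], d⟩
  | .ins k, ⟨o, d⟩ => ⟨o.set k (insert x (o.getD k ∅)), d⟩
  | .cl, ⟨o, d⟩ =>
      if mode then ⟨o.tail, insert (insert x (o.headD ∅)) d⟩
      else ⟨o.dropLast, insert (insert x (o.getLastD ∅)) d⟩

def run (mode : Bool) : List (Fin n) → List Step → St n → St n
  | x :: xs, st :: t, s => run mode xs t (doStep mode x st s)
  | _, _, s => s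

def initSt (n : ℕ) : St n := ⟨[], ∅⟩

def decode (mode : Bool) (n : ℕ) (w : List Step) : Finset (Finset (Fin n)) :=
  (run mode (List.finRange n) w (initSt n)).done

def blockOf (P : Finset (Finset (Fin n))) (x : Fin n) : Finset (Fin n) :=
  (P.filter (fun B => x ∈ B)).sup id

def openAt (P : Finset (Finset (Fin n))) (x : Fin n) : Finset (Finset (Fin n)) :=
  P.filter (fun A => (∃ y ∈ A, y < x) ∧ (∃ y ∈ A, x ≤ y))

def stepOf (P : Finset (Finset (Fin n))) (x : Fin n) : Step :=
  let B := blockOf P x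
  if B.card ≤ 1 then .sing
  else if ∀ y ∈ B, x ≤ y then .op
  else if ∀ y ∈ B, y ≤ x then .cl
  else .ins ((openAt P x).filter
      (fun A => ∃ a ∈ A, ∀ b ∈ blockOf P x, a < b)).card

def encode (P : Finset (Finset (Fin n))) : List Step :=
  (List.finRange n).map (stepOf P)

/-! ### helpers -/

lemma filt_succ (C : Finset (Fin n)) (x : Fin n) (i : ℕ) (hx : x.val = i) :
    C.filter (fun y => y.val < i + 1) =
      if x ∈ C then insert x (C.filter (fun y => y.val < i))
      else C.filter (fun y => y.val < i) := by
  split_ifs with h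
  · ext y
    simp only [Finset.mem_filter, Finset.mem_insert]
    constructor
    · rintro ⟨hy, hlt⟩
      rcases eq_or_ne y x with rfl | hne
      · exact Or.inl rfl
      · have : (y : ℕ) ≠ i := fun hh => hne (Fin.ext (hh.trans hx.symm))
        exact Or.inr ⟨hy, by omega⟩
    · rintro (rfl | ⟨hy, hlt⟩)
      · exact ⟨h, by omega⟩
      · exact ⟨hy, by omega⟩
  · ext y
    simp only [Finset.mem_filter]
    constructor
    · rintro ⟨hy, hlt⟩
      have hyx : y ≠ x := fun hh => h (hh ▸ hy)
      have : y.val ≠ i := fun hh => hyx (Fin.ext (hh.trans hx.symm))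
      exact ⟨hy, by omega⟩
    · rintro ⟨hy, hlt⟩; exact ⟨hy, by omega⟩

lemma blockOf_eq (P : Finset (Finset (Fin n)))
    (hdisj : ∀ A ∈ P, ∀ B ∈ P, A ≠ B → Disjoint A B)
    {C : Finset (Fin n)} (hC : C ∈ P) {x : Fin n} (hx : x ∈ C) :
    blockOf P x = C := by
  have : P.filter (fun B => x ∈ B) = {C} := by
    ext B
    simp only [Finset.mem_filter, Finset.mem_singleton]
    constructor
    · rintro ⟨hB, hxB⟩
      by_contra hne
      exact (Finset.disjoint_left.1 (hdisj B hB C hC hne) hxB) hx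
    · rintro rfl; exact ⟨hC, hx⟩
  rw [blockOf, this, Finset.sup_singleton, id]

lemma stepOf_eq_sing (P : Finset (Finset (Fin n))) {x : Fin n}
    (h : blockOf P x = {x}) : stepOf P x = .sing := by
  rw [stepOf]; simp [h]

lemma stepOf_eq_op (P : Finset (Finset (Fin n))) {x : Fin n} {C : Finset (Fin n)}
    (h : blockOf P x = C) (hcard : 2 ≤ C.card) (hmin : ∀ y ∈ C, x ≤ y) :
    stepOf P x = .op := by
  rw [stepOf]
  simp only [h]
  rw [if_neg (by omega), if_pos hmin]

lemma stepOf_eq_cl (P : Finset (Finset (Fin n))) {x : Fin n} {C : Finset (Fin n)}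
    (h : blockOf P x = C) (hcard : 2 ≤ C.card) (hx : x ∈ C) (hmax : ∀ y ∈ C, y ≤ x) :
    stepOf P x = .cl := by
  rw [stepOf]
  simp only [h]
  rw [if_neg (by omega), if_neg, if_pos hmax]
  intro hall
  obtain ⟨a, ha, b, hb, hab⟩ := Finset.one_lt_card.1 (by omega : 1 < C.card)
  have h1 : a = x := le_antisymm (hmax a ha) (hall a ha)
  have h2 : b = x := le_antisymm (hmax b hb) (hall b hb)
  exact hab (h1.trans h2.symm)

lemma stepOf_eq_ins (P : Finset (Finset (Fin n))) {x : Fin n} {C : Finset (Fin n)}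
    (h : blockOf P x = C) (hlo : ∃ y ∈ C, y < x) (hhi : ∃ y ∈ C, x < y) :
    stepOf P x = .ins ((openAt P x).filter
      (fun A => ∃ a ∈ A, ∀ b ∈ C, a < b)).card := by
  obtain ⟨a, ha, hax⟩ := hlo
  obtain ⟨b, hb, hbx⟩ := hhi
  rw [stepOf]
  simp only [h]
  rw [if_neg, if_neg, if_neg]
  · intro hall; exact absurd (hall b hb) (not_le.2 hbx)
  · intro hall; exact absurd (hall a ha) (not_le.2 hax)
  · intro hc
    have := Finset.one_lt_card.2 ⟨a, ha, b, hb, by exact fun hh => absurd (hh ▸ hax) (not_lt.2 hbx.le)⟩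
    omega

lemma rank_lemma (P : Finset (Finset (Fin n))) (opens : List (Finset (Fin n)))
    (i : ℕ) (x : Fin n) (hx : x.val = i)
    (hne : ∀ j, j < opens.length → (opens.getD j ∅).Nonempty)
    (hlt : ∀ j, j < opens.length → ∀ y ∈ opens.getD j ∅, y.val < i)
    (hsort : ∀ j j', j < j' → j' < opens.length →
      ∃ a ∈ opens.getD j ∅, ∀ b ∈ opens.getD j' ∅, a < b)
    (hdisjP : ∀ A ∈ P, ∀ B ∈ P, A ≠ B → Disjoint A B)
    (ha : ∀ j, j < opens.length → ∃ C ∈ P,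
      C.filter (fun y => y.val < i) = opens.getD j ∅ ∧ ∃ y ∈ C, i ≤ y.val)
    (hb : ∀ C ∈ openAt P x, ∃ j, j < opens.length ∧
      C.filter (fun y => y.val < i) = opens.getD j ∅)
    (k : ℕ) (hk : k < opens.length) (Ck : Finset (Fin n)) (hCk : Ck ∈ P)
    (hCkf : Ck.filter (fun y => y.val < i) = opens.getD k ∅) :
    ((openAt P x).filter (fun A => ∃ a ∈ A, ∀ b ∈ Ck, a < b)).card = k := by
  classical
  choose! f hfP hff hfy using ha
  -- elements of `f j` decompose
  have hdecomp : ∀ j, j < opens.length → ∀ b ∈ f j, b ∈ opens.getD j ∅ ∨ i ≤ b.val := by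
    intro j hj b hbj
    by_cases hb' : b.val < i
    · exact Or.inl ((hff j hj) ▸ (Finset.mem_filter.2 ⟨hbj, hb'⟩))
    · exact Or.inr (by omega)
  have hsub : ∀ j, j < opens.length → opens.getD j ∅ ⊆ f j := by
    intro j hj y hy
    have := (hff j hj) ▸ hy
    exact (Finset.mem_filter.1 this).1
  have hmem : ∀ j, j < opens.length → f j ∈ openAt P x := by
    intro j hj
    obtain ⟨a, haj⟩ := hne j hj
    obtain ⟨y, hy, hyi⟩ := hfy j hj
    refine Finset.mem_filter.2 ⟨hfP j hj, ⟨a, hsub j hj haj, ?_⟩, ⟨y, hy, ?_⟩⟩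
    · have := hlt j hj a haj; exact Fin.lt_def.2 (by omega)
    · exact Fin.le_def.2 (by omega)
  have horder : ∀ j j', j < j' → j' < opens.length →
      ∃ a ∈ f j, ∀ b ∈ f j', a < b := by
    intro j j' hjj hj'
    obtain ⟨a, haj, hab⟩ := hsort j j' hjj hj'
    refine ⟨a, hsub j (hjj.trans hj') haj, fun b hbj' => ?_⟩
    rcases hdecomp j' hj' b hbj' with hb' | hb'
    · exact hab b hb'
    · have := hlt j (hjj.trans hj') a haj
      exact Fin.lt_def.2 (by omega)
  have hinj : ∀ j j', j < opens.length → j' < opens.length → f j = f j' → j = j' := by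
    intro j j' hj hj' heq
    by_contra hne'
    rcases Nat.lt_or_ge j j' with h | h
    · obtain ⟨a, haj, hab⟩ := horder j j' h hj'
      exact absurd (hab a (heq ▸ haj)) (lt_irrefl a)
    · have h' : j' < j := by omega
      obtain ⟨a, haj, hab⟩ := horder j' j h' hj
      exact absurd (hab a (heq.symm ▸ haj)) (lt_irrefl a)
  have hfk : f k = Ck := by
    by_contra hne'
    obtain ⟨a, haj⟩ := hne k hk
    have h1 : a ∈ f k := hsub k hk haj
    have h2 : a ∈ Ck := by
      have := hCkf ▸ haj
      exact (Finset.mem_filter.1 this).1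
    exact (Finset.disjoint_left.1 (hdisjP _ (hfP k hk) _ hCk hne') h1) h2
  have hsurj : ∀ C ∈ openAt P x, ∃ j, j < opens.length ∧ C = f j := by
    intro C hC
    obtain ⟨j, hj, hCf⟩ := hb C hC
    refine ⟨j, hj, ?_⟩
    by_contra hne'
    obtain ⟨a, haj⟩ := hne j hj
    have h1 : a ∈ f j := hsub j hj haj
    have h2 : a ∈ C := (Finset.mem_filter.1 (hCf ▸ haj)).1
    have hCP : C ∈ P := (Finset.mem_filter.1 hC).1
    exact (Finset.disjoint_left.1 (hdisjP _ hCP _ (hfP j hj) hne') h2) h1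
  have himg : (openAt P x).filter (fun A => ∃ a ∈ A, ∀ b ∈ Ck, a < b)
      = (Finset.range k).image f := by
    ext A
    simp only [Finset.mem_filter, Finset.mem_image, Finset.mem_range]
    constructor
    · rintro ⟨hA, a, haA, hab⟩
      obtain ⟨j, hj, rfl⟩ := hsurj A hA
      refine ⟨j, ?_, rfl⟩
      rcases Nat.lt_trichotomy j k with h | rfl | h
      · exact h
      · exfalso
        have haCk : a ∈ Ck := by rwa [← hfk]
        exact absurd (hab a haCk) (lt_irrefl a)
      · obtain ⟨a', ha', hab'⟩ := horder k j h hj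
        rw [hfk] at ha'
        exact absurd (lt_trans (hab a' ha') (hab' a haA)) (lt_irrefl a)
    · rintro ⟨j, hj, rfl⟩
      have hjL : j < opens.length := hj.trans hk
      obtain ⟨a, haj, hab⟩ := horder j k hj hk
      exact ⟨hmem j hjL, a, haj, fun b hb' => hab b (hfk ▸ hb')⟩
  rw [himg, Finset.card_image_of_injOn, Finset.card_range]
  intro j hj j' hj' heq
  simp only [Finset.coe_range, Set.mem_Iio] at hj hj'
  exact hinj j j' (hj.trans hk) (hj'.trans hk) heq

/-! ### list getD helpers -/

lemma getD_append_sing {α : Type*} [Inhabited α] (o : List α) (a d : α) (j : ℕ) :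
    (o ++ [a]).getD j d = if j < o.length then o.getD j d else if j = o.length then a else d := by
  rcases Nat.lt_trichotomy j o.length with h | h | h
  · rw [List.getD_eq_getElem _ _ (by simp; omega), List.getElem_append, dif_pos h,
      if_pos h, List.getD_eq_getElem _ _ h]
  · subst h
    rw [List.getD_eq_getElem _ _ (by simp), List.getElem_append]
    simp
  · rw [if_neg (by omega), if_neg (by omega), List.getD_eq_getElem?_getD,
      List.getElem?_eq_none (by simp; omega)]
    rfl

lemma getD_set' {α : Type*} (o : List α) (k j : ℕ) (a d : α) :
    (o.set k a).getD j d = if j = k ∧ k < o.length then a else o.getD j d := by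
  rw [List.getD_eq_getElem?_getD, List.getD_eq_getElem?_getD, List.getElem?_set]
  rcases eq_or_ne k j with rfl | hkj
  · by_cases hk : k < o.length
    · rw [if_pos rfl, if_pos hk, if_pos ⟨rfl, hk⟩]; rfl
    · rw [if_pos rfl, if_neg hk, if_neg (by tauto),
        List.getElem?_eq_none (by omega)]
  · rw [if_neg hkj, if_neg (by tauto)]

lemma getD_tail {α : Type*} (o : List α) (j : ℕ) (d : α) :
    o.tail.getD j d = o.getD (j+1) d := by
  cases o <;> simp [List.getD]

lemma getD_headD {α : Type*} (o : List α) (d : α) : o.headD d = o.getD 0 d := by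
  cases o <;> rfl

lemma getD_dropLast {α : Type*} (o : List α) (j : ℕ) (d : α) (h : j < o.length - 1) :
    o.dropLast.getD j d = o.getD j d := by
  rw [List.getD_eq_getElem _ _ (by simp; omega), List.getD_eq_getElem _ _ (by omega),
    List.getElem_dropLast]

lemma getD_getLastD {α : Type*} (o : List α) (d : α) (h : o ≠ []) :
    o.getLastD d = o.getD (o.length - 1) d := by
  rw [List.getLastD_eq_getLast? , List.getLast?_eq_getLast h, Option.getD_some,
    List.getLast_eq_getElem, List.getD_eq_getElem _ _ (by
      have := List.length_pos_iff.2 h; omega)]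


/-! ### the invariant -/

def ModeOk (mode : Bool) (P : Finset (Finset (Fin n))) : Prop :=
  if mode then
    ∀ A ∈ P, ∀ B ∈ P, A ≠ B → 2 ≤ A.card → 2 ≤ B.card →
      ∀ (hA : A.Nonempty) (hB : B.Nonempty),
        (A.min' hA < B.min' hB ↔ A.max' hA < B.max' hB)
  else
    ∀ A ∈ P, ∀ B ∈ P, ∀ (hA : A.Nonempty) (hB : B.Nonempty),
      ¬ (A.min' hA < B.min' hB ∧ B.min' hB < A.max' hA ∧ A.max' hA < B.max' hB)

structure Inv (mode : Bool) (i : ℕ) (opens : List (Finset (Fin n)))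
    (done : Finset (Finset (Fin n))) : Prop where
  done_ne : ∀ B ∈ done, B.Nonempty
  done_lt : ∀ B ∈ done, ∀ y ∈ B, y.val < i
  opens_ne : ∀ j, j < opens.length → (opens.getD j ∅).Nonempty
  opens_lt : ∀ j, j < opens.length → ∀ y ∈ opens.getD j ∅, y.val < i
  disjDD : ∀ A ∈ done, ∀ B ∈ done, A ≠ B → Disjoint A B
  disjDO : ∀ A ∈ done, ∀ j, j < opens.length → Disjoint A (opens.getD j ∅)
  disjOO : ∀ j j', j < j' → j' < opens.length →
    Disjoint (opens.getD j ∅) (opens.getD j' ∅)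
  cover : ∀ y : Fin n, y.val < i →
    (∃ B ∈ done, y ∈ B) ∨ ∃ j, j < opens.length ∧ y ∈ opens.getD j ∅
  sorted : ∀ j j', j < j' → j' < opens.length →
    ∃ a ∈ opens.getD j ∅, ∀ b ∈ opens.getD j' ∅, a < b
  fifoDO : mode = true → ∀ A ∈ done, 2 ≤ A.card → ∀ j, j < opens.length →
    ∃ a ∈ A, ∀ b ∈ opens.getD j ∅, a < b
  fifoDD : mode = true → ∀ A ∈ done, ∀ B ∈ done, A ≠ B → 2 ≤ A.card → 2 ≤ B.card →
    ∀ (hA : A.Nonempty) (hB : B.Nonempty),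
      (A.min' hA < B.min' hB ↔ A.max' hA < B.max' hB)
  lifoDO : mode = false → ∀ A ∈ done, ∀ j, j < opens.length →
    (∀ a ∈ A, ∀ b ∈ opens.getD j ∅, a < b) ∨
      (∃ b ∈ opens.getD j ∅, ∀ a ∈ A, b < a)
  lifoDD : mode = false → ∀ A ∈ done, ∀ B ∈ done,
    ∀ (hA : A.Nonempty) (hB : B.Nonempty),
      ¬ (A.min' hA < B.min' hB ∧ B.min' hB < A.max' hA ∧ A.max' hA < B.max' hB)

section InvStep

variable {mode : Bool} {i : ℕ} {x : Fin n} {o : List (Finset (Fin n))}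
  {d : Finset (Finset (Fin n))}

lemma lt_of_val_lt {y : Fin n} (hx : x.val = i) (hy : y.val < i) : y < x :=
  Fin.lt_def.2 (by omega)

lemma ne_of_val_lt {y : Fin n} (hx : x.val = i) (hy : y.val < i) : y ≠ x :=
  fun h => by subst h; omega

lemma inv_step_sing (hx : x.val = i) (hInv : Inv mode i o d) :
    Inv mode (i+1) o (insert {x} d) := by
  have hxnotin : ∀ B ∈ d, x ∉ B := fun B hB hxB => by
    have := hInv.done_lt B hB x hxB; omega
  have hxnotinO : ∀ j, j < o.length → x ∉ o.getD j ∅ := fun j hj hxO => by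
    have := hInv.opens_lt j hj x hxO; omega
  refine ⟨?_, ?_, ?_, ?_, ?_, ?_, ?_, ?_, ?_, ?_, ?_, ?_, ?_⟩
  · intro B hB
    rcases Finset.mem_insert.1 hB with rfl | hB
    · exact ⟨x, Finset.mem_singleton_self x⟩
    · exact hInv.done_ne B hB
  · intro B hB y hy
    rcases Finset.mem_insert.1 hB with rfl | hB
    · rw [Finset.mem_singleton] at hy; omega
    · have := hInv.done_lt B hB y hy; omega
  · exact hInv.opens_ne
  · intro j hj y hy; have := hInv.opens_lt j hj y hy; omega
  · intro A hA B hB hAB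
    rcases Finset.mem_insert.1 hA with rfl | hA
    · rcases Finset.mem_insert.1 hB with rfl | hB
      · exact absurd rfl hAB
      · exact Finset.disjoint_singleton_left.2 (hxnotin B hB)
    · rcases Finset.mem_insert.1 hB with rfl | hB
      · exact Finset.disjoint_singleton_right.2 (hxnotin A hA)
      · exact hInv.disjDD A hA B hB hAB
  · intro A hA j hj
    rcases Finset.mem_insert.1 hA with rfl | hA
    · exact Finset.disjoint_singleton_left.2 (hxnotinO j hj)
    · exact hInv.disjDO A hA j hj
  · exact hInv.disjOO
  · intro y hy
    by_cases hyi : y.val < i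
    · rcases hInv.cover y hyi with ⟨B, hB, hyB⟩ | ⟨j, hj, hyO⟩
      · exact Or.inl ⟨B, Finset.mem_insert_of_mem hB, hyB⟩
      · exact Or.inr ⟨j, hj, hyO⟩
    · have : y = x := Fin.ext (by omega)
      subst this
      exact Or.inl ⟨{y}, Finset.mem_insert_self _ _, Finset.mem_singleton_self y⟩
  · exact hInv.sorted
  · intro hm A hA hcard j hj
    rcases Finset.mem_insert.1 hA with rfl | hA
    · simp at hcard
    · exact hInv.fifoDO hm A hA hcard j hj
  · intro hm A hA B hB hAB hcA hcB hA' hB'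
    rcases Finset.mem_insert.1 hA with rfl | hA
    · simp at hcA
    · rcases Finset.mem_insert.1 hB with rfl | hB
      · simp at hcB
      · exact hInv.fifoDD hm A hA B hB hAB hcA hcB hA' hB'
  · intro hm A hA j hj
    rcases Finset.mem_insert.1 hA with rfl | hA
    · right
      obtain ⟨b, hb⟩ := hInv.opens_ne j hj
      refine ⟨b, hb, fun a ha => ?_⟩
      rw [Finset.mem_singleton] at ha; subst ha
      exact lt_of_val_lt hx (hInv.opens_lt j hj b hb)
    · exact hInv.lifoDO hm A hA j hj
  · intro hm A hA B hB hA' hB'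
    rcases Finset.mem_insert.1 hA with rfl | hA
    · simp only [Finset.min'_singleton, Finset.max'_singleton]
      rintro ⟨h1, h2, h3⟩
      exact absurd (h1.trans h2) (lt_irrefl _)
    · rcases Finset.mem_insert.1 hB with rfl | hB
      · simp only [Finset.min'_singleton, Finset.max'_singleton]
        rintro ⟨h1, h2, h3⟩
        exact absurd (h2.trans h3) (lt_irrefl _)
      · exact hInv.lifoDD hm A hA B hB hA' hB'


lemma inv_step_op (hx : x.val = i) (hInv : Inv mode i o d) :
    Inv mode (i+1) (o ++ [{x}]) d := by
  have hxnotinO : ∀ j, j < o.length → x ∉ o.getD j ∅ := fun j hj hxO => by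
    have := hInv.opens_lt j hj x hxO; omega
  have hxnotin : ∀ B ∈ d, x ∉ B := fun B hB hxB => by
    have := hInv.done_lt B hB x hxB; omega
  have hlen : (o ++ [({x} : Finset (Fin n))]).length = o.length + 1 := by simp
  have hg : ∀ j, j < o.length + 1 → (o ++ [({x} : Finset (Fin n))]).getD j ∅ =
      if j < o.length then o.getD j ∅ else {x} := by
    intro j hj
    rw [getD_append_sing]
    by_cases h : j < o.length
    · rw [if_pos h, if_pos h]
    · rw [if_neg h, if_neg h, if_pos (by omega)]
  refine ⟨?_, ?_, ?_, ?_, ?_, ?_, ?_, ?_, ?_, ?_, ?_, ?_, ?_⟩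
  · exact hInv.done_ne
  · intro B hB y hy; have := hInv.done_lt B hB y hy; omega
  · intro j hj
    rw [hlen] at hj; rw [hg j hj]
    by_cases h : j < o.length
    · rw [if_pos h]; exact hInv.opens_ne j h
    · rw [if_neg h]; exact ⟨x, Finset.mem_singleton_self x⟩
  · intro j hj y hy
    rw [hlen] at hj; rw [hg j hj] at hy
    by_cases h : j < o.length
    · rw [if_pos h] at hy; have := hInv.opens_lt j h y hy; omega
    · rw [if_neg h] at hy; rw [Finset.mem_singleton] at hy; subst hy; omega
  · exact hInv.disjDD
  · intro A hA j hj
    rw [hlen] at hj; rw [hg j hj]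
    by_cases h : j < o.length
    · rw [if_pos h]; exact hInv.disjDO A hA j h
    · rw [if_neg h]; exact Finset.disjoint_singleton_right.2 (hxnotin A hA)
  · intro j j' hjj hj'
    rw [hlen] at hj'
    rw [hg j' hj', hg j (by omega)]
    by_cases h : j' < o.length
    · rw [if_pos h, if_pos (by omega)]; exact hInv.disjOO j j' hjj h
    · rw [if_neg h, if_pos (by omega)]
      exact Finset.disjoint_singleton_right.2 (hxnotinO j (by omega))
  · intro y hy
    by_cases hyi : y.val < i
    · rcases hInv.cover y hyi with ⟨B, hB, hyB⟩ | ⟨j, hj, hyO⟩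
      · exact Or.inl ⟨B, hB, hyB⟩
      · refine Or.inr ⟨j, by omega, ?_⟩
        rw [hg j (by omega), if_pos hj]; exact hyO
    · have : y = x := Fin.ext (by omega)
      subst this
      refine Or.inr ⟨o.length, by omega, ?_⟩
      rw [hg o.length (by omega), if_neg (lt_irrefl _)]
      exact Finset.mem_singleton_self y
  · intro j j' hjj hj'
    rw [hlen] at hj'
    rw [hg j' hj', hg j (by omega)]
    by_cases h : j' < o.length
    · rw [if_pos h, if_pos (by omega)]; exact hInv.sorted j j' hjj h
    · rw [if_neg h, if_pos (by omega)]
      obtain ⟨a, ha⟩ := hInv.opens_ne j (by omega)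
      refine ⟨a, ha, fun b hb => ?_⟩
      rw [Finset.mem_singleton] at hb; subst hb
      exact lt_of_val_lt hx (hInv.opens_lt j (by omega) a ha)
  · intro hm A hA hcard j hj
    rw [hlen] at hj
    rw [hg j hj]
    by_cases h : j < o.length
    · rw [if_pos h]; exact hInv.fifoDO hm A hA hcard j h
    · rw [if_neg h]
      obtain ⟨a, ha⟩ := hInv.done_ne A hA
      refine ⟨a, ha, fun b hb => ?_⟩
      rw [Finset.mem_singleton] at hb; subst hb
      exact lt_of_val_lt hx (hInv.done_lt A hA a ha)
  · exact hInv.fifoDD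
  · intro hm A hA j hj
    rw [hlen] at hj
    rw [hg j hj]
    by_cases h : j < o.length
    · rw [if_pos h]; exact hInv.lifoDO hm A hA j h
    · rw [if_neg h]
      left
      intro a ha b hb
      rw [Finset.mem_singleton] at hb; subst hb
      exact lt_of_val_lt hx (hInv.done_lt A hA a ha)
  · exact hInv.lifoDD

lemma inv_step_ins {k : ℕ} (hx : x.val = i) (hk : k < o.length)
    (hInv : Inv mode i o d) :
    Inv mode (i+1) (o.set k (insert x (o.getD k ∅))) d := by
  have hxnotinO : ∀ j, j < o.length → x ∉ o.getD j ∅ := fun j hj hxO => by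
    have := hInv.opens_lt j hj x hxO; omega
  have hxnotin : ∀ B ∈ d, x ∉ B := fun B hB hxB => by
    have := hInv.done_lt B hB x hxB; omega
  have hlen : (o.set k (insert x (o.getD k ∅))).length = o.length := by simp
  have hg : ∀ j, (o.set k (insert x (o.getD k ∅))).getD j ∅ =
      if j = k then insert x (o.getD k ∅) else o.getD j ∅ := by
    intro j
    rw [getD_set']
    by_cases h : j = k
    · rw [if_pos ⟨h, hk⟩, if_pos h]
    · rw [if_neg (by tauto), if_neg h]
  refine ⟨?_, ?_, ?_, ?_, ?_, ?_, ?_, ?_, ?_, ?_, ?_, ?_, ?_⟩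
  · exact hInv.done_ne
  · intro B hB y hy; have := hInv.done_lt B hB y hy; omega
  · intro j hj
    rw [hlen] at hj; rw [hg j]
    by_cases h : j = k
    · rw [if_pos h]; exact Finset.insert_nonempty _ _
    · rw [if_neg h]; exact hInv.opens_ne j hj
  · intro j hj y hy
    rw [hlen] at hj; rw [hg j] at hy
    by_cases h : j = k
    · rw [if_pos h] at hy
      rcases Finset.mem_insert.1 hy with rfl | hy
      · omega
      · have := hInv.opens_lt k hk y hy; omega
    · rw [if_neg h] at hy; have := hInv.opens_lt j hj y hy; omega
  · exact hInv.disjDD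
  · intro A hA j hj
    rw [hlen] at hj; rw [hg j]
    by_cases h : j = k
    · rw [if_pos h, Finset.disjoint_insert_right]
      exact ⟨hxnotin A hA, hInv.disjDO A hA k hk⟩
    · rw [if_neg h]; exact hInv.disjDO A hA j hj
  · intro j j' hjj hj'
    rw [hlen] at hj'
    rw [hg j, hg j']
    by_cases h : j = k
    · rw [if_pos h, if_neg (by omega), Finset.disjoint_insert_left]
      subst h
      exact ⟨hxnotinO j' hj', hInv.disjOO j j' hjj hj'⟩
    · rw [if_neg h]
      by_cases h' : j' = k
      · rw [if_pos h', Finset.disjoint_insert_right]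
        subst h'
        exact ⟨hxnotinO j (by omega), hInv.disjOO j j' hjj hj'⟩
      · rw [if_neg h']; exact hInv.disjOO j j' hjj hj'
  · intro y hy
    by_cases hyi : y.val < i
    · rcases hInv.cover y hyi with ⟨B, hB, hyB⟩ | ⟨j, hj, hyO⟩
      · exact Or.inl ⟨B, hB, hyB⟩
      · refine Or.inr ⟨j, by omega, ?_⟩
        rw [hg j]
        by_cases h : j = k
        · rw [if_pos h]; subst h; exact Finset.mem_insert_of_mem hyO
        · rw [if_neg h]; exact hyO
    · have : y = x := Fin.ext (by omega)
      subst this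
      refine Or.inr ⟨k, by omega, ?_⟩
      rw [hg k, if_pos rfl]
      exact Finset.mem_insert_self _ _
  · intro j j' hjj hj'
    rw [hlen] at hj'
    rw [hg j, hg j']
    by_cases h : j = k
    · rw [if_pos h, if_neg (by omega)]
      obtain ⟨a, ha, hab⟩ := hInv.sorted j j' hjj hj'
      subst h
      exact ⟨a, Finset.mem_insert_of_mem ha, hab⟩
    · rw [if_neg h]
      by_cases h' : j' = k
      · rw [if_pos h']
        subst h'
        obtain ⟨a, ha, hab⟩ := hInv.sorted j j' hjj hj'
        refine ⟨a, ha, fun b hb => ?_⟩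
        rcases Finset.mem_insert.1 hb with rfl | hb
        · exact lt_of_val_lt hx (hInv.opens_lt j (by omega) a ha)
        · exact hab b hb
      · rw [if_neg h']; exact hInv.sorted j j' hjj hj'
  · intro hm A hA hcard j hj
    rw [hlen] at hj
    rw [hg j]
    by_cases h : j = k
    · rw [if_pos h]
      obtain ⟨a, ha, hab⟩ := hInv.fifoDO hm A hA hcard k hk
      refine ⟨a, ha, fun b hb => ?_⟩
      rcases Finset.mem_insert.1 hb with rfl | hb
      · exact lt_of_val_lt hx (hInv.done_lt A hA a ha)
      · exact hab b hb
    · rw [if_neg h]; exact hInv.fifoDO hm A hA hcard j hj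
  · exact hInv.fifoDD
  · intro hm A hA j hj
    rw [hlen] at hj
    rw [hg j]
    by_cases h : j = k
    · rw [if_pos h]
      rcases hInv.lifoDO hm A hA k hk with h1 | ⟨b, hb, hba⟩
      · left
        intro a ha b hb
        rcases Finset.mem_insert.1 hb with rfl | hb
        · exact lt_of_val_lt hx (hInv.done_lt A hA a ha)
        · exact h1 a ha b hb
      · exact Or.inr ⟨b, Finset.mem_insert_of_mem hb, hba⟩
    · rw [if_neg h]; exact hInv.lifoDO hm A hA j hj
  · exact hInv.lifoDD


lemma inv_step_cl_fifo (hx : x.val = i) (h0 : 0 < o.length)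
    (hInv : Inv true i o d) :
    Inv true (i+1) o.tail (insert (insert x (o.getD 0 ∅)) d) := by
  set C := insert x (o.getD 0 ∅) with hC
  have hxnotinO : ∀ j, j < o.length → x ∉ o.getD j ∅ := fun j hj hxO => by
    have := hInv.opens_lt j hj x hxO; omega
  have hxnotin : ∀ B ∈ d, x ∉ B := fun B hB hxB => by
    have := hInv.done_lt B hB x hxB; omega
  have hlen : o.tail.length = o.length - 1 := List.length_tail
  have hO0 := hInv.opens_ne 0 h0
  have hCne : C.Nonempty := Finset.insert_nonempty _ _
  have hCd : ∀ A ∈ d, Disjoint C A := by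
    intro A hA
    rw [hC, Finset.disjoint_insert_left]
    exact ⟨hxnotin A hA, (hInv.disjDO A hA 0 h0).symm⟩
  have hCmem : ∀ y ∈ C, y = x ∨ y ∈ o.getD 0 ∅ := fun y hy => Finset.mem_insert.1 hy
  have hClt : ∀ y ∈ C, y.val < i + 1 := by
    intro y hy
    rcases hCmem y hy with rfl | hy'
    · omega
    · have := hInv.opens_lt 0 h0 y hy'; omega
  -- for the monotonicity of done blocks
  have hminC : ∀ A ∈ d, 2 ≤ A.card → ∀ (hA' : A.Nonempty),
      A.min' hA' < C.min' hCne := by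
    intro A hA hcard hA'
    obtain ⟨a, haA, hab⟩ := hInv.fifoDO rfl A hA hcard 0 h0
    refine lt_of_le_of_lt (Finset.min'_le A a haA) ?_
    rcases hCmem _ (Finset.min'_mem C hCne) with hmx | hmo
    · rw [hmx]; exact lt_of_val_lt hx (hInv.done_lt A hA a haA)
    · exact hab _ hmo
  have hmaxC : ∀ A ∈ d, ∀ (hA' : A.Nonempty), A.max' hA' < C.max' hCne := by
    intro A hA hA'
    refine lt_of_lt_of_le (lt_of_val_lt hx (hInv.done_lt A hA _ (Finset.max'_mem A hA'))) ?_
    exact Finset.le_max' C x (Finset.mem_insert_self _ _)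
  refine ⟨?_, ?_, ?_, ?_, ?_, ?_, ?_, ?_, ?_, ?_, ?_, ?_, ?_⟩
  · intro B hB
    rcases Finset.mem_insert.1 hB with rfl | hB
    · exact hCne
    · exact hInv.done_ne B hB
  · intro B hB y hy
    rcases Finset.mem_insert.1 hB with rfl | hB
    · exact hClt y hy
    · have := hInv.done_lt B hB y hy; omega
  · intro j hj
    rw [hlen] at hj; rw [getD_tail]
    exact hInv.opens_ne (j+1) (by omega)
  · intro j hj y hy
    rw [hlen] at hj; rw [getD_tail] at hy
    have := hInv.opens_lt (j+1) (by omega) y hy; omega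
  · intro A hA B hB hAB
    rcases Finset.mem_insert.1 hA with rfl | hA
    · rcases Finset.mem_insert.1 hB with rfl | hB
      · exact absurd rfl hAB
      · exact hCd B hB
    · rcases Finset.mem_insert.1 hB with rfl | hB
      · exact (hCd A hA).symm
      · exact hInv.disjDD A hA B hB hAB
  · intro A hA j hj
    rw [hlen] at hj; rw [getD_tail]
    rcases Finset.mem_insert.1 hA with rfl | hA
    · rw [hC, Finset.disjoint_insert_left]
      exact ⟨hxnotinO (j+1) (by omega), hInv.disjOO 0 (j+1) (by omega) (by omega)⟩
    · exact hInv.disjDO A hA (j+1) (by omega)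
  · intro j j' hjj hj'
    rw [hlen] at hj'; rw [getD_tail, getD_tail]
    exact hInv.disjOO (j+1) (j'+1) (by omega) (by omega)
  · intro y hy
    by_cases hyi : y.val < i
    · rcases hInv.cover y hyi with ⟨B, hB, hyB⟩ | ⟨j, hj, hyO⟩
      · exact Or.inl ⟨B, Finset.mem_insert_of_mem hB, hyB⟩
      · rcases Nat.eq_zero_or_pos j with rfl | hjpos
        · exact Or.inl ⟨C, Finset.mem_insert_self _ _, Finset.mem_insert_of_mem hyO⟩
        · refine Or.inr ⟨j - 1, by omega, ?_⟩
          rw [getD_tail]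
          have : j - 1 + 1 = j := by omega
          rw [this]; exact hyO
    · have : y = x := Fin.ext (by omega)
      subst this
      exact Or.inl ⟨C, Finset.mem_insert_self _ _, Finset.mem_insert_self _ _⟩
  · intro j j' hjj hj'
    rw [hlen] at hj'; rw [getD_tail, getD_tail]
    exact hInv.sorted (j+1) (j'+1) (by omega) (by omega)
  · intro _ A hA hcard j hj
    rw [hlen] at hj; rw [getD_tail]
    rcases Finset.mem_insert.1 hA with rfl | hA
    · obtain ⟨a, ha, hab⟩ := hInv.sorted 0 (j+1) (by omega) (by omega)
      exact ⟨a, Finset.mem_insert_of_mem ha, hab⟩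
    · exact hInv.fifoDO rfl A hA hcard (j+1) (by omega)
  · intro _ A hA B hB hAB hcA hcB hA' hB'
    rcases Finset.mem_insert.1 hA with rfl | hA
    · rcases Finset.mem_insert.1 hB with rfl | hB
      · exact absurd rfl hAB
      · exact iff_of_false (not_lt.2 (hminC B hB hcB hB').le)
          (not_lt.2 (hmaxC B hB hB').le)
    · rcases Finset.mem_insert.1 hB with rfl | hB
      · exact iff_of_true (hminC A hA hcA hA') (hmaxC A hA hA')
      · exact hInv.fifoDD rfl A hA B hB hAB hcA hcB hA' hB'
  · intro hm; simp at hm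
  · intro hm; simp at hm

lemma inv_step_cl_lifo (hx : x.val = i) (h0 : 0 < o.length)
    (hInv : Inv false i o d) :
    Inv false (i+1) o.dropLast
      (insert (insert x (o.getD (o.length - 1) ∅)) d) := by
  set L := o.length - 1 with hL
  set C := insert x (o.getD L ∅) with hC
  have hxnotinO : ∀ j, j < o.length → x ∉ o.getD j ∅ := fun j hj hxO => by
    have := hInv.opens_lt j hj x hxO; omega
  have hxnotin : ∀ B ∈ d, x ∉ B := fun B hB hxB => by
    have := hInv.done_lt B hB x hxB; omega
  have hlen : o.dropLast.length = o.length - 1 := List.length_dropLast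
  have hOL := hInv.opens_ne L (by omega)
  have hCne : C.Nonempty := Finset.insert_nonempty _ _
  have hCd : ∀ A ∈ d, Disjoint C A := by
    intro A hA
    rw [hC, Finset.disjoint_insert_left]
    exact ⟨hxnotin A hA, (hInv.disjDO A hA L (by omega)).symm⟩
  have hCmem : ∀ y ∈ C, y = x ∨ y ∈ o.getD L ∅ := fun y hy => Finset.mem_insert.1 hy
  have hClt : ∀ y ∈ C, y.val < i + 1 := by
    intro y hy
    rcases hCmem y hy with rfl | hy'
    · omega
    · have := hInv.opens_lt L (by omega) y hy'; omega
  have hmaxC : ∀ A ∈ d, ∀ (hA' : A.Nonempty), A.max' hA' < C.max' hCne := by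
    intro A hA hA'
    refine lt_of_lt_of_le (lt_of_val_lt hx (hInv.done_lt A hA _ (Finset.max'_mem A hA'))) ?_
    exact Finset.le_max' C x (Finset.mem_insert_self _ _)
  refine ⟨?_, ?_, ?_, ?_, ?_, ?_, ?_, ?_, ?_, ?_, ?_, ?_, ?_⟩
  · intro B hB
    rcases Finset.mem_insert.1 hB with rfl | hB
    · exact hCne
    · exact hInv.done_ne B hB
  · intro B hB y hy
    rcases Finset.mem_insert.1 hB with rfl | hB
    · exact hClt y hy
    · have := hInv.done_lt B hB y hy; omega
  · intro j hj
    rw [hlen] at hj; rw [getD_dropLast _ _ _ (by omega)]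
    exact hInv.opens_ne j (by omega)
  · intro j hj y hy
    rw [hlen] at hj; rw [getD_dropLast _ _ _ (by omega)] at hy
    have := hInv.opens_lt j (by omega) y hy; omega
  · intro A hA B hB hAB
    rcases Finset.mem_insert.1 hA with rfl | hA
    · rcases Finset.mem_insert.1 hB with rfl | hB
      · exact absurd rfl hAB
      · exact hCd B hB
    · rcases Finset.mem_insert.1 hB with rfl | hB
      · exact (hCd A hA).symm
      · exact hInv.disjDD A hA B hB hAB
  · intro A hA j hj
    rw [hlen] at hj; rw [getD_dropLast _ _ _ (by omega)]
    rcases Finset.mem_insert.1 hA with rfl | hA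
    · rw [hC, Finset.disjoint_insert_left]
      refine ⟨hxnotinO j (by omega), ?_⟩
      exact (hInv.disjOO j L (by omega) (by omega)).symm
    · exact hInv.disjDO A hA j (by omega)
  · intro j j' hjj hj'
    rw [hlen] at hj'; rw [getD_dropLast _ _ _ (by omega), getD_dropLast _ _ _ (by omega)]
    exact hInv.disjOO j j' hjj (by omega)
  · intro y hy
    by_cases hyi : y.val < i
    · rcases hInv.cover y hyi with ⟨B, hB, hyB⟩ | ⟨j, hj, hyO⟩
      · exact Or.inl ⟨B, Finset.mem_insert_of_mem hB, hyB⟩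
      · rcases Nat.lt_or_ge j L with hjL | hjL
        · refine Or.inr ⟨j, by omega, ?_⟩
          rw [getD_dropLast _ _ _ (by omega)]; exact hyO
        · have : j = L := by omega
          subst this
          exact Or.inl ⟨C, Finset.mem_insert_self _ _, Finset.mem_insert_of_mem hyO⟩
    · have : y = x := Fin.ext (by omega)
      subst this
      exact Or.inl ⟨C, Finset.mem_insert_self _ _, Finset.mem_insert_self _ _⟩
  · intro j j' hjj hj'
    rw [hlen] at hj'; rw [getD_dropLast _ _ _ (by omega), getD_dropLast _ _ _ (by omega)]
    exact hInv.sorted j j' hjj (by omega)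
  · intro hm; simp at hm
  · intro hm; simp at hm
  · intro _ A hA j hj
    rw [hlen] at hj; rw [getD_dropLast _ _ _ (by omega)]
    rcases Finset.mem_insert.1 hA with rfl | hA
    · right
      obtain ⟨a, ha, hab⟩ := hInv.sorted j L (by omega) (by omega)
      refine ⟨a, ha, fun c hc => ?_⟩
      rcases hCmem c hc with rfl | hc'
      · exact lt_of_val_lt hx (hInv.opens_lt j (by omega) a ha)
      · exact hab c hc'
    · exact hInv.lifoDO rfl A hA j (by omega)
  · intro _ A hA B hB hA' hB'
    rcases Finset.mem_insert.1 hA with rfl | hA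
    · rcases Finset.mem_insert.1 hB with rfl | hB
      · rintro ⟨h1, _, _⟩; exact absurd h1 (lt_irrefl _)
      · rintro ⟨h1, h2, h3⟩
        exact absurd h3 (not_lt.2 (hmaxC B hB hB').le)
    · rcases Finset.mem_insert.1 hB with rfl | hB
      · rintro ⟨h1, h2, h3⟩
        rcases hInv.lifoDO rfl A hA L (by omega) with hall | ⟨b, hb, hba⟩
        · -- max A < min C
          have : A.max' hA' < C.min' hB' := by
            rcases hCmem _ (Finset.min'_mem C hB') with hmx | hmo
            · rw [hmx]; exact lt_of_val_lt hx (hInv.done_lt A hA _ (Finset.max'_mem A hA'))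
            · exact hall _ (Finset.max'_mem A hA') _ hmo
          exact absurd h2 (not_lt.2 this.le)
        · -- min C ≤ b < min A
          have h4 : C.min' hB' ≤ b := Finset.min'_le C b (Finset.mem_insert_of_mem hb)
          have h5 : b < A.min' hA' := hba _ (Finset.min'_mem A hA')
          exact absurd h1 (not_lt.2 (h4.trans h5.le))
      · exact hInv.lifoDD rfl A hA B hB hA' hB'

end InvStep




/-! ### more helpers for the key induction -/

lemma run_nil (mode : Bool) (xs : List (Fin n)) (s : St n) :
    run mode xs [] s = s := by cases xs <;> rfl

lemma finRange_drop (i : ℕ) (h : i < n) :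
    (List.finRange n).drop i = (⟨i, h⟩ : Fin n) :: (List.finRange n).drop (i+1) := by
  rw [List.drop_eq_getElem_cons (by simpa using h)]
  congr 1
  simp

section FiltHelp

variable {i : ℕ} {x : Fin n} {C S : Finset (Fin n)}

lemma filt_of_succ_no_x (hx : x.val = i)
    (hS : C.filter (fun y => y.val < i + 1) = S) (hxS : x ∉ S) :
    C.filter (fun y => y.val < i) = S := by
  rw [filt_succ C x i hx] at hS
  by_cases hxC : x ∈ C
  · rw [if_pos hxC] at hS
    exact absurd (hS ▸ Finset.mem_insert_self x _) hxS
  · rwa [if_neg hxC] at hS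

lemma filt_of_succ_with_x (hx : x.val = i)
    (hS : C.filter (fun y => y.val < i + 1) = insert x S) (hxS : x ∉ S)
    (hSlt : ∀ y ∈ S, y.val < i) :
    C.filter (fun y => y.val < i) = S ∧ x ∈ C := by
  have hxC : x ∈ C := by
    have : x ∈ C.filter (fun y => y.val < i + 1) := by
      rw [hS]; exact Finset.mem_insert_self x S
    exact (Finset.mem_filter.1 this).1
  rw [filt_succ C x i hx, if_pos hxC] at hS
  refine ⟨?_, hxC⟩
  ext y
  constructor
  · intro hy
    have hyi : y.val < i := (Finset.mem_filter.1 hy).2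
    have : y ∈ insert x S := hS ▸ Finset.mem_insert_of_mem hy
    rcases Finset.mem_insert.1 this with rfl | h
    · omega
    · exact h
  · intro hy
    have : y ∈ insert x (C.filter (fun y => y.val < i)) := by
      rw [hS]; exact Finset.mem_insert_of_mem hy
    rcases Finset.mem_insert.1 this with rfl | h
    · exact absurd hy hxS
    · exact h

lemma filt_insert_lt (hx : x.val = i) (hSlt : ∀ y ∈ S, y.val < i) :
    (insert x S).filter (fun y => y.val < i) = S := by
  ext y
  simp only [Finset.mem_filter, Finset.mem_insert]
  constructor
  · rintro ⟨rfl | hy, hlt⟩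
    · omega
    · exact hy
  · intro hy
    exact ⟨Or.inr hy, hSlt y hy⟩

end FiltHelp


@[simp] lemma doStep_sing (mode : Bool) (x : Fin n) (o : List (Finset (Fin n)))
    (d : Finset (Finset (Fin n))) : doStep mode x .sing ⟨o, d⟩ = ⟨o, insert {x} d⟩ := rfl

@[simp] lemma doStep_op (mode : Bool) (x : Fin n) (o : List (Finset (Fin n)))
    (d : Finset (Finset (Fin n))) : doStep mode x .op ⟨o, d⟩ = ⟨o ++ [{x}], d⟩ := rfl

@[simp] lemma doStep_ins (mode : Bool) (x : Fin n) (k : ℕ) (o : List (Finset (Fin n)))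
    (d : Finset (Finset (Fin n))) :
    doStep mode x (.ins k) ⟨o, d⟩ = ⟨o.set k (insert x (o.getD k ∅)), d⟩ := rfl

lemma doStep_cl_fifo (x : Fin n) (o : List (Finset (Fin n)))
    (d : Finset (Finset (Fin n))) :
    doStep true x .cl ⟨o, d⟩ = ⟨o.tail, insert (insert x (o.headD ∅)) d⟩ := rfl

lemma doStep_cl_lifo (x : Fin n) (o : List (Finset (Fin n)))
    (d : Finset (Finset (Fin n))) :
    doStep false x .cl ⟨o, d⟩ = ⟨o.dropLast, insert (insert x (o.getLastD ∅)) d⟩ := rfl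

def outD (mode : Bool) (i : ℕ) (t : List Step) (o : List (Finset (Fin n)))
    (d : Finset (Finset (Fin n))) : Finset (Finset (Fin n)) :=
  (run mode ((List.finRange n).drop i) t (⟨o, d⟩ : St n)).done

theorem key (mode : Bool) (t : List Step) : ∀ (i : ℕ) (o : List (Finset (Fin n)))
    (d : Finset (Finset (Fin n))),
    i + t.length = n →
    validFrom o.length t →
    Inv mode i o d →
    IsSetPartition n (outD mode i t o d) ∧
    ModeOk mode (outD mode i t o d) ∧
    d ⊆ outD mode i t o d ∧
    (∀ j, j < o.length → ∃ C ∈ outD mode i t o d,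
      C.filter (fun y => y.val < i) = o.getD j ∅ ∧ ∃ y ∈ C, i ≤ y.val) ∧
    (∀ C ∈ outD mode i t o d, C ∈ d ∨
      (∃ j, j < o.length ∧ C.filter (fun y => y.val < i) = o.getD j ∅) ∨
      (∀ y ∈ C, i ≤ y.val)) ∧
    (∀ j (hj : j < t.length) (hij : i + j < n),
      stepOf (outD mode i t o d) ⟨i + j, hij⟩ = t.get ⟨j, hj⟩) := by
  induction t with
  | nil =>
    intro i o d hlen hval hInv
    have hi : i = n := by simpa using hlen
    have ho : o = [] := List.length_eq_zero_iff.1 hval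
    subst ho
    have hout : outD mode i [] ([] : List (Finset (Fin n))) d = d := by
      unfold outD; rw [run_nil]
    rw [hout]
    refine ⟨⟨hInv.done_ne, hInv.disjDD, ?_⟩, ?_, Finset.Subset.refl d,
      fun j hj => absurd hj (by simp), fun C hC => Or.inl hC, fun j hj => absurd hj (by simp)⟩
    · intro y
      rcases hInv.cover y (by omega : y.val < i) with ⟨B, hB, hyB⟩ | ⟨j, hj, _⟩
      · exact ⟨B, hB, hyB⟩
      · exact absurd hj (by simp)
    · cases mode
      · exact fun A hA B hB hA' hB' => hInv.lifoDD rfl A hA B hB hA' hB'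
      · exact fun A hA B hB hAB hcA hcB hA' hB' => hInv.fifoDD rfl A hA B hB hAB hcA hcB hA' hB'
  | cons st t' ih =>
    intro i o d hlen hval hInv
    have hi : i < n := by simp at hlen; omega
    set x : Fin n := ⟨i, hi⟩ with hxdef
    have hx : x.val = i := rfl
    have hxnotinO : ∀ j, j < o.length → x ∉ o.getD j ∅ := fun j hj hxO => by
      have := hInv.opens_lt j hj x hxO; omega
    have hxnotin : ∀ B ∈ d, x ∉ B := fun B hB hxB => by
      have := hInv.done_lt B hB x hxB; omega
    have hdrop := finRange_drop i hi
    have hrun : ∀ (o' : List (Finset (Fin n))) d', doStep mode x st ⟨o, d⟩ = ⟨o', d'⟩ →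
        outD mode i (st :: t') o d = outD mode (i+1) t' o' d' := by
      intro o' d' hdo
      rw [outD, outD, hdrop]
      show (run mode ((List.finRange n).drop (i+1)) t' (doStep mode x st ⟨o, d⟩)).done = _
      rw [hdo]
    cases st with
    | sing =>
      have hInv' := inv_step_sing hx hInv
      have hval' : validFrom o.length t' := hval
      obtain ⟨hPart, hMode, hsub, hK4, hK5, hK6⟩ :=
        ih (i+1) o (insert {x} d) (by simp at hlen ⊢; omega) hval' hInv'
      rw [hrun o (insert {x} d) (doStep_sing mode x o d)]
      set P := outD mode (i+1) t' o (insert {x} d) with hP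
      refine ⟨hPart, hMode, (Finset.subset_insert _ _).trans hsub, ?_, ?_, ?_⟩
      · intro j hj
        obtain ⟨C, hCP, hCf, y, hyC, hyi⟩ := hK4 j hj
        exact ⟨C, hCP, filt_of_succ_no_x hx hCf (hxnotinO j hj), y, hyC, by omega⟩
      · intro C hCP
        rcases hK5 C hCP with hCd | ⟨j, hj, hCf⟩ | hge
        · rcases Finset.mem_insert.1 hCd with rfl | hCd
          · refine Or.inr (Or.inr ?_)
            intro y hy
            rw [Finset.mem_singleton] at hy; subst hy; omega
          · exact Or.inl hCd
        · exact Or.inr (Or.inl ⟨j, hj, filt_of_succ_no_x hx hCf (hxnotinO j hj)⟩)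
        · exact Or.inr (Or.inr fun y hy => by have := hge y hy; omega)
      · intro j hj hij
        cases j with
        | zero =>
          have hxx : (⟨i + 0, hij⟩ : Fin n) = x := Fin.ext (show i + 0 = i by omega)
          rw [hxx]
          have hxP : ({x} : Finset (Fin n)) ∈ P := hsub (Finset.mem_insert_self _ _)
          exact stepOf_eq_sing P (blockOf_eq P hPart.2.1 hxP (Finset.mem_singleton_self x))
        | succ j =>
          have h1 : (⟨i + (j+1), hij⟩ : Fin n) = ⟨i + 1 + j, by omega⟩ := Fin.ext (show i + (j+1) = i + 1 + j by omega)
          rw [h1]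
          exact hK6 j (by simpa using hj) (by omega)
    | op =>
      have hInv' := inv_step_op hx hInv
      obtain ⟨hPart, hMode, hsub, hK4, hK5, hK6⟩ :=
        ih (i+1) (o ++ [{x}]) d (by simp at hlen ⊢; omega)
          (by rw [List.length_append]; exact hval) hInv'
      rw [hrun _ _ (doStep_op mode x o d)]
      set P := outD mode (i+1) t' (o ++ [{x}]) d with hP
      have hlenap : (o ++ [({x} : Finset (Fin n))]).length = o.length + 1 := by simp
      have hK4i : ∀ j, j < o.length → ∃ C ∈ P,
          C.filter (fun y => y.val < i) = o.getD j ∅ ∧ ∃ y ∈ C, i ≤ y.val := by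
        intro j hj
        obtain ⟨C, hCP, hCf, y, hyC, hyi⟩ := hK4 j (by omega)
        rw [getD_append_sing, if_pos hj] at hCf
        exact ⟨C, hCP, filt_of_succ_no_x hx hCf (hxnotinO j hj), y, hyC, by omega⟩
      refine ⟨hPart, hMode, hsub, hK4i, ?_, ?_⟩
      · intro C hCP
        rcases hK5 C hCP with hCd | ⟨j, hj, hCf⟩ | hge
        · exact Or.inl hCd
        · rw [hlenap] at hj
          by_cases hjo : j < o.length
          · rw [getD_append_sing, if_pos hjo] at hCf
            exact Or.inr (Or.inl ⟨j, hjo, filt_of_succ_no_x hx hCf (hxnotinO j hjo)⟩)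
          · rw [getD_append_sing, if_neg hjo, if_pos (by omega)] at hCf
            refine Or.inr (Or.inr ?_)
            intro y hy
            by_cases hyi : y.val < i + 1
            · have : y ∈ C.filter (fun y => y.val < i + 1) := Finset.mem_filter.2 ⟨hy, hyi⟩
              rw [hCf, Finset.mem_singleton] at this
              subst this; omega
            · omega
        · exact Or.inr (Or.inr fun y hy => by have := hge y hy; omega)
      · intro j hj hij
        cases j with
        | zero =>
          have hxx : (⟨i + 0, hij⟩ : Fin n) = x := Fin.ext (show i + 0 = i by omega)
          rw [hxx]
          obtain ⟨C, hCP, hCf, y, hyC, hyi⟩ := hK4 o.length (by omega)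
          rw [getD_append_sing, if_neg (lt_irrefl _), if_pos rfl] at hCf
          have hxC : x ∈ C := by
            have : x ∈ C.filter (fun y => y.val < i + 1) := by
              rw [hCf]; exact Finset.mem_singleton_self x
            exact (Finset.mem_filter.1 this).1
          have hcard : 2 ≤ C.card := by
            rw [show (2 : ℕ) = 1 + 1 by rfl]
            refine Finset.one_lt_card.2 ⟨x, hxC, y, hyC, ?_⟩
            intro hxy; subst hxy; omega
          refine stepOf_eq_op P (blockOf_eq P hPart.2.1 hCP hxC) hcard ?_
          intro z hz
          by_cases hzi : z.val < i + 1
          · have : z ∈ C.filter (fun y => y.val < i + 1) := Finset.mem_filter.2 ⟨hz, hzi⟩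
            rw [hCf, Finset.mem_singleton] at this
            exact this ▸ le_refl x
          · exact Fin.le_def.2 (by omega)
        | succ j =>
          have h1 : (⟨i + (j+1), hij⟩ : Fin n) = ⟨i + 1 + j, by omega⟩ :=
            Fin.ext (show i + (j+1) = i + 1 + j by omega)
          rw [h1]
          exact hK6 j (by simpa using hj) (by omega)
    | cl =>
      have hvalp : 0 < o.length ∧ validFrom (o.length - 1) t' := hval
      cases mode with
      | true =>
        have hInv' := inv_step_cl_fifo hx hvalp.1 hInv
        obtain ⟨hPart, hMode, hsub, hK4, hK5, hK6⟩ :=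
          ih (i+1) o.tail (insert (insert x (o.getD 0 ∅)) d) (by simp at hlen ⊢; omega)
            (by rw [List.length_tail]; exact hvalp.2) hInv'
        have hdo : doStep true x .cl ⟨o, d⟩ =
            ⟨o.tail, insert (insert x (o.getD 0 ∅)) d⟩ := by
          rw [doStep_cl_fifo, getD_headD]
        rw [hrun _ _ hdo]
        set C0 := insert x (o.getD 0 ∅) with hC0
        set P := outD true (i+1) t' o.tail (insert C0 d) with hP
        have hC0P : C0 ∈ P := hsub (Finset.mem_insert_self _ _)
        have hC0f : C0.filter (fun y => y.val < i) = o.getD 0 ∅ :=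
          filt_insert_lt hx (hInv.opens_lt 0 hvalp.1)
        have hK4i : ∀ j, j < o.length → ∃ C ∈ P,
            C.filter (fun y => y.val < i) = o.getD j ∅ ∧ ∃ y ∈ C, i ≤ y.val := by
          intro j hj
          rcases Nat.eq_zero_or_pos j with rfl | hjpos
          · exact ⟨C0, hC0P, hC0f, x, Finset.mem_insert_self _ _, by omega⟩
          · obtain ⟨C, hCP, hCf, y, hyC, hyi⟩ := hK4 (j-1) (by rw [List.length_tail]; omega)
            rw [getD_tail, show j - 1 + 1 = j by omega] at hCf
            exact ⟨C, hCP, filt_of_succ_no_x hx hCf (hxnotinO j hj), y, hyC, by omega⟩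
        refine ⟨hPart, hMode, (Finset.subset_insert _ _).trans hsub, hK4i, ?_, ?_⟩
        · intro C hCP
          rcases hK5 C hCP with hCd | ⟨j, hj, hCf⟩ | hge
          · rcases Finset.mem_insert.1 hCd with rfl | hCd
            · exact Or.inr (Or.inl ⟨0, hvalp.1, hC0f⟩)
            · exact Or.inl hCd
          · rw [List.length_tail] at hj
            rw [getD_tail] at hCf
            refine Or.inr (Or.inl ⟨j+1, by omega, filt_of_succ_no_x hx hCf (hxnotinO (j+1) (by omega))⟩)
          · exact Or.inr (Or.inr fun y hy => by have := hge y hy; omega)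
        · intro j hj hij
          cases j with
          | zero =>
            have hxx : (⟨i + 0, hij⟩ : Fin n) = x := Fin.ext (show i + 0 = i by omega)
            rw [hxx]
            obtain ⟨a, ha⟩ := hInv.opens_ne 0 hvalp.1
            have hcard : 2 ≤ C0.card := by
              rw [show (2 : ℕ) = 1 + 1 by rfl]
              refine Finset.one_lt_card.2 ⟨x, Finset.mem_insert_self _ _,
                a, Finset.mem_insert_of_mem ha, ?_⟩
              intro hxa
              have := hInv.opens_lt 0 hvalp.1 a ha
              subst hxa; omega
            refine stepOf_eq_cl P (blockOf_eq P hPart.2.1 hC0P (Finset.mem_insert_self _ _))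
              hcard (Finset.mem_insert_self _ _) ?_
            intro z hz
            rcases Finset.mem_insert.1 hz with rfl | hz
            · exact le_refl _
            · have := hInv.opens_lt 0 hvalp.1 z hz
              exact Fin.le_def.2 (by omega)
          | succ j =>
            have h1 : (⟨i + (j+1), hij⟩ : Fin n) = ⟨i + 1 + j, by omega⟩ :=
              Fin.ext (show i + (j+1) = i + 1 + j by omega)
            rw [h1]
            exact hK6 j (by simpa using hj) (by omega)
      | false =>
        set L := o.length - 1 with hL
        have hInv' := inv_step_cl_lifo hx hvalp.1 hInv
        obtain ⟨hPart, hMode, hsub, hK4, hK5, hK6⟩ :=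
          ih (i+1) o.dropLast (insert (insert x (o.getD L ∅)) d) (by simp at hlen ⊢; omega)
            (by simpa using hvalp.2) hInv'
        have hdo : doStep false x .cl ⟨o, d⟩ =
            ⟨o.dropLast, insert (insert x (o.getD L ∅)) d⟩ := by
          rw [doStep_cl_lifo, getD_getLastD _ _ (by intro h; rw [h] at hvalp; simp at hvalp)]
        rw [hrun _ _ hdo]
        set C0 := insert x (o.getD L ∅) with hC0
        set P := outD false (i+1) t' o.dropLast (insert C0 d) with hP
        have hC0P : C0 ∈ P := hsub (Finset.mem_insert_self _ _)
        have hC0f : C0.filter (fun y => y.val < i) = o.getD L ∅ :=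
          filt_insert_lt hx (hInv.opens_lt L (by omega))
        have hK4i : ∀ j, j < o.length → ∃ C ∈ P,
            C.filter (fun y => y.val < i) = o.getD j ∅ ∧ ∃ y ∈ C, i ≤ y.val := by
          intro j hj
          rcases Nat.lt_or_ge j L with hjL | hjL
          · obtain ⟨C, hCP, hCf, y, hyC, hyi⟩ := hK4 j (by rw [List.length_dropLast]; omega)
            rw [getD_dropLast _ _ _ (by omega)] at hCf
            exact ⟨C, hCP, filt_of_succ_no_x hx hCf (hxnotinO j hj), y, hyC, by omega⟩
          · have hjeq : j = L := by omega
            subst hjeq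
            exact ⟨C0, hC0P, hC0f, x, Finset.mem_insert_self _ _, by omega⟩
        refine ⟨hPart, hMode, (Finset.subset_insert _ _).trans hsub, hK4i, ?_, ?_⟩
        · intro C hCP
          rcases hK5 C hCP with hCd | ⟨j, hj, hCf⟩ | hge
          · rcases Finset.mem_insert.1 hCd with rfl | hCd
            · exact Or.inr (Or.inl ⟨L, by omega, hC0f⟩)
            · exact Or.inl hCd
          · rw [List.length_dropLast] at hj
            rw [getD_dropLast _ _ _ (by omega)] at hCf
            exact Or.inr (Or.inl ⟨j, by omega, filt_of_succ_no_x hx hCf (hxnotinO j (by omega))⟩)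
          · exact Or.inr (Or.inr fun y hy => by have := hge y hy; omega)
        · intro j hj hij
          cases j with
          | zero =>
            have hxx : (⟨i + 0, hij⟩ : Fin n) = x := Fin.ext (show i + 0 = i by omega)
            rw [hxx]
            obtain ⟨a, ha⟩ := hInv.opens_ne L (by omega)
            have hcard : 2 ≤ C0.card := by
              rw [show (2 : ℕ) = 1 + 1 by rfl]
              refine Finset.one_lt_card.2 ⟨x, Finset.mem_insert_self _ _,
                a, Finset.mem_insert_of_mem ha, ?_⟩
              intro hxa
              have := hInv.opens_lt L (by omega) a ha
              subst hxa; omega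
            refine stepOf_eq_cl P (blockOf_eq P hPart.2.1 hC0P (Finset.mem_insert_self _ _))
              hcard (Finset.mem_insert_self _ _) ?_
            intro z hz
            rcases Finset.mem_insert.1 hz with rfl | hz
            · exact le_refl _
            · have := hInv.opens_lt L (by omega) z hz
              exact Fin.le_def.2 (by omega)
          | succ j =>
            have h1 : (⟨i + (j+1), hij⟩ : Fin n) = ⟨i + 1 + j, by omega⟩ :=
              Fin.ext (show i + (j+1) = i + 1 + j by omega)
            rw [h1]
            exact hK6 j (by simpa using hj) (by omega)
    | ins k =>
      have hvalp : k < o.length ∧ validFrom o.length t' := hval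
      have hInv' := inv_step_ins hx hvalp.1 hInv
      obtain ⟨hPart, hMode, hsub, hK4, hK5, hK6⟩ :=
        ih (i+1) (o.set k (insert x (o.getD k ∅))) d (by simp at hlen ⊢; omega)
          (by rw [List.length_set]; exact hvalp.2) hInv'
      rw [hrun _ _ (doStep_ins mode x k o d)]
      set P := outD mode (i+1) t' (o.set k (insert x (o.getD k ∅))) d with hP
      have hlens : (o.set k (insert x (o.getD k ∅))).length = o.length := by simp
      have hgetk : ∀ y ∈ o.getD k ∅, y.val < i := hInv.opens_lt k hvalp.1
      have hK4i : ∀ j, j < o.length → ∃ C ∈ P,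
          C.filter (fun y => y.val < i) = o.getD j ∅ ∧ ∃ y ∈ C, i ≤ y.val := by
        intro j hj
        obtain ⟨C, hCP, hCf, y, hyC, hyi⟩ := hK4 j (by omega)
        by_cases hjk : j = k
        · subst hjk
          rw [getD_set', if_pos ⟨rfl, hvalp.1⟩] at hCf
          obtain ⟨hCf', hxC⟩ := filt_of_succ_with_x hx hCf (hxnotinO j hvalp.1) (hInv.opens_lt j hvalp.1)
          exact ⟨C, hCP, hCf', x, hxC, by omega⟩
        · rw [getD_set', if_neg (by tauto)] at hCf
          exact ⟨C, hCP, filt_of_succ_no_x hx hCf (hxnotinO j hj), y, hyC, by omega⟩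
      have hK5i : ∀ C ∈ P, C ∈ d ∨
          (∃ j, j < o.length ∧ C.filter (fun y => y.val < i) = o.getD j ∅) ∨
          (∀ y ∈ C, i ≤ y.val) := by
        intro C hCP
        rcases hK5 C hCP with hCd | ⟨j, hj, hCf⟩ | hge
        · exact Or.inl hCd
        · rw [hlens] at hj
          by_cases hjk : j = k
          · subst hjk
            rw [getD_set', if_pos ⟨rfl, hvalp.1⟩] at hCf
            obtain ⟨hCf', _⟩ := filt_of_succ_with_x hx hCf (hxnotinO j hvalp.1) (hInv.opens_lt j hvalp.1)
            exact Or.inr (Or.inl ⟨j, hj, hCf'⟩)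
          · rw [getD_set', if_neg (by tauto)] at hCf
            exact Or.inr (Or.inl ⟨j, hj, filt_of_succ_no_x hx hCf (hxnotinO j hj)⟩)
        · exact Or.inr (Or.inr fun y hy => by have := hge y hy; omega)
      refine ⟨hPart, hMode, hsub, hK4i, hK5i, ?_⟩
      intro j hj hij
      cases j with
      | zero =>
        have hxx : (⟨i + 0, hij⟩ : Fin n) = x := Fin.ext (show i + 0 = i by omega)
        rw [hxx]
        obtain ⟨C, hCP, hCf, y, hyC, hyi⟩ := hK4 k (by omega)
        rw [getD_set', if_pos ⟨rfl, hvalp.1⟩] at hCf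
        obtain ⟨hCf', hxC⟩ := filt_of_succ_with_x hx hCf (hxnotinO k hvalp.1) (hInv.opens_lt k hvalp.1)
        obtain ⟨a, ha⟩ := hInv.opens_ne k hvalp.1
        have haC : a ∈ C ∧ a.val < i := by
          have : a ∈ C.filter (fun y => y.val < i) := hCf' ▸ ha
          exact ⟨(Finset.mem_filter.1 this).1, (Finset.mem_filter.1 this).2⟩
        have hblock := blockOf_eq P hPart.2.1 hCP hxC
        rw [stepOf_eq_ins P hblock ⟨a, haC.1, lt_of_val_lt hx haC.2⟩
          ⟨y, hyC, Fin.lt_def.2 (by omega)⟩]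
        have hrank := rank_lemma P o i x hx hInv.opens_ne hInv.opens_lt hInv.sorted
          hPart.2.1 hK4i ?_ k hvalp.1 C hCP hCf'
        · rw [hrank]; rfl
        · intro C' hC'
          obtain ⟨hC'P, ⟨y1, hy1, hy1x⟩, ⟨y2, hy2, hxy2⟩⟩ := Finset.mem_filter.1 hC'
          rcases hK5i C' hC'P with hCd | ⟨j', hj', hf⟩ | hge
          · have := hInv.done_lt C' hCd y2 hy2
            have := Fin.le_def.1 hxy2
            omega
          · exact ⟨j', hj', hf⟩
          · have := hge y1 hy1
            have := Fin.lt_def.1 hy1x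
            omega
      | succ j =>
        have h1 : (⟨i + (j+1), hij⟩ : Fin n) = ⟨i + 1 + j, by omega⟩ :=
          Fin.ext (show i + (j+1) = i + 1 + j by omega)
        rw [h1]
        exact hK6 j (by simpa using hj) (by omega)


/-! ### second induction: running a partition's own encoding -/

lemma filt_unchanged {i : ℕ} {x : Fin n} {C : Finset (Fin n)} (hx : x.val = i) (hxC : x ∉ C) :
    C.filter (fun y => y.val < i + 1) = C.filter (fun y => y.val < i) := by
  rw [filt_succ C x i hx, if_neg hxC]

lemma filt_succ_mem {i : ℕ} {x : Fin n} {C : Finset (Fin n)} (hx : x.val = i) (hxC : x ∈ C) :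
    C.filter (fun y => y.val < i + 1) = insert x (C.filter (fun y => y.val < i)) := by
  rw [filt_succ C x i hx, if_pos hxC]

structure Rel (P : Finset (Finset (Fin n))) (i : ℕ) (o : List (Finset (Fin n)))
    (d : Finset (Finset (Fin n))) : Prop where
  hdone : d = P.filter (fun B => ∀ y ∈ B, y.val < i)
  mem : ∀ j, j < o.length → ∃ C ∈ P, (∃ y ∈ C, y.val < i) ∧ (∃ y ∈ C, i ≤ y.val) ∧
    o.getD j ∅ = C.filter (fun y => y.val < i)
  idx : ∀ C ∈ P, (∃ y ∈ C, y.val < i) → (∃ y ∈ C, i ≤ y.val) →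
    ∃ j, j < o.length ∧ o.getD j ∅ = C.filter (fun y => y.val < i)
  sorted : ∀ j j', j < j' → j' < o.length →
    ∃ a ∈ o.getD j ∅, ∀ b ∈ o.getD j' ∅, a < b

namespace Rel

variable {P : Finset (Finset (Fin n))} {i : ℕ} {o : List (Finset (Fin n))}
  {d : Finset (Finset (Fin n))}

lemma opens_lt (hR : Rel P i o d) : ∀ j, j < o.length → ∀ y ∈ o.getD j ∅, y.val < i := by
  intro j hj y hy
  obtain ⟨C, _, _, _, hf⟩ := hR.mem j hj
  rw [hf] at hy
  exact (Finset.mem_filter.1 hy).2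

lemma opens_ne (hR : Rel P i o d) : ∀ j, j < o.length → (o.getD j ∅).Nonempty := by
  intro j hj
  obtain ⟨C, _, ⟨y, hy, hyi⟩, _, hf⟩ := hR.mem j hj
  exact ⟨y, hf ▸ Finset.mem_filter.2 ⟨hy, hyi⟩⟩

lemma getD_distinct (hR : Rel P i o d) : ∀ j j', j < o.length → j' < o.length →
    o.getD j ∅ = o.getD j' ∅ → j = j' := by
  intro j j' hj hj' heq
  by_contra hne
  rcases Nat.lt_or_ge j j' with h | h
  · obtain ⟨a, ha, hab⟩ := hR.sorted j j' h hj'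
    exact absurd (hab a (heq ▸ ha)) (lt_irrefl a)
  · have h' : j' < j := by omega
    obtain ⟨a, ha, hab⟩ := hR.sorted j' j h' hj
    exact absurd (hab a (heq.symm ▸ ha)) (lt_irrefl a)

/-- two blocks of `P` whose truncation is the same nonempty open entry coincide -/
lemma block_unique (hdisj : ∀ A ∈ P, ∀ B ∈ P, A ≠ B → Disjoint A B)
    (hR : Rel P i o d) {j : ℕ} (hj : j < o.length) {C C' : Finset (Fin n)}
    (hC : C ∈ P) (hC' : C' ∈ P)
    (hf : o.getD j ∅ = C.filter (fun y => y.val < i))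
    (hf' : o.getD j ∅ = C'.filter (fun y => y.val < i)) : C = C' := by
  by_contra hne
  obtain ⟨a, ha⟩ := hR.opens_ne j hj
  have h1 : a ∈ C := (Finset.mem_filter.1 (hf ▸ ha)).1
  have h2 : a ∈ C' := (Finset.mem_filter.1 (hf' ▸ ha)).1
  exact (Finset.disjoint_left.1 (hdisj C hC C' hC' hne) h1) h2

end Rel

lemma encode_drop (P : Finset (Finset (Fin n))) (i : ℕ) (hi : i < n) :
    (encode P).drop i = stepOf P ⟨i, hi⟩ :: (encode P).drop (i+1) := by
  rw [encode, ← List.map_drop, ← List.map_drop, finRange_drop i hi, List.map_cons]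

lemma encode_length (P : Finset (Finset (Fin n))) : (encode P).length = n := by
  simp [encode]


theorem key2 (mode : Bool) (P : Finset (Finset (Fin n)))
    (hne : ∀ A ∈ P, A.Nonempty)
    (hdisj : ∀ A ∈ P, ∀ B ∈ P, A ≠ B → Disjoint A B)
    (hcov : ∀ x : Fin n, ∃ A ∈ P, x ∈ A)
    (hMode : ModeOk mode P) :
    ∀ (m i : ℕ) (o : List (Finset (Fin n))) (d : Finset (Finset (Fin n))),
    i + m = n → Rel P i o d →
    validFrom o.length ((encode P).drop i) ∧
    (run mode ((List.finRange n).drop i) ((encode P).drop i) ⟨o, d⟩).done = P := by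
  intro m
  induction m with
  | zero =>
    intro i o d hm hR
    have hi : i = n := by omega
    subst hi
    have hdrop : (encode P).drop i = [] := List.drop_eq_nil_of_le (by rw [encode_length])
    have hlen0 : o.length = 0 := by
      by_contra h
      obtain ⟨C, _, _, ⟨y, _, hyi⟩, _⟩ := hR.mem 0 (by omega)
      omega
    rw [hdrop, hlen0, run_nil]
    refine ⟨rfl, ?_⟩
    show d = P
    rw [hR.hdone]
    exact Finset.filter_true_of_mem (fun C hC y hy => y.isLt)
  | succ m ih =>
    intro i o d hm hR
    have hi : i < n := by omega
    set x : Fin n := ⟨i, hi⟩ with hxdef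
    have hx : x.val = i := rfl
    obtain ⟨B, hBP, hxB⟩ := hcov x
    have hblock := blockOf_eq P hdisj hBP hxB
    have hCeqB : ∀ C ∈ P, x ∈ C → C = B := fun C hC hxC =>
      (blockOf_eq P hdisj hC hxC).symm.trans hblock
    have hnotmem : ∀ C ∈ P, C ≠ B → x ∉ C := fun C hC hne' hxC =>
      hne' (hCeqB C hC hxC)
    rw [encode_drop P i hi, finRange_drop i hi]
    -- helper to finish each case
    have finish : ∀ (st : Step) (o' : List (Finset (Fin n))) (d' : Finset (Finset (Fin n))),
        stepOf P x = st →
        doStep mode x st ⟨o, d⟩ = ⟨o', d'⟩ →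
        Rel P (i+1) o' d' →
        (validFrom o'.length ((encode P).drop (i+1)) →
          validFrom o.length (st :: (encode P).drop (i+1))) →
        validFrom o.length (stepOf P x :: (encode P).drop (i+1)) ∧
        (run mode (x :: (List.finRange n).drop (i+1))
          (stepOf P x :: (encode P).drop (i+1)) ⟨o, d⟩).done = P := by
      intro st o' d' hstep hdo hR' hv
      obtain ⟨hval', hrun'⟩ := ih (i+1) o' d' (by omega) hR'
      rw [hstep]
      constructor
      · exact hv hval'
      · show (run mode ((List.finRange n).drop (i+1)) ((encode P).drop (i+1))
          (doStep mode x st ⟨o, d⟩)).done = P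
        rw [hdo]
        exact hrun'
    by_cases hcard : B.card ≤ 1
    · -- singleton
      have hBx : B = {x} := by
        obtain ⟨a, ha⟩ := Finset.card_eq_one.1 (le_antisymm hcard
          (Finset.card_pos.2 ⟨x, hxB⟩))
        rw [ha] at hxB ⊢
        rw [Finset.mem_singleton] at hxB
        rw [hxB]
      have hstep : stepOf P x = .sing := stepOf_eq_sing P (hblock.trans hBx)
      have hCneB : ∀ C ∈ P, (∃ y ∈ C, y.val < i) → C ≠ B := by
        rintro C hC ⟨y, hy, hyi⟩ rfl
        rw [hBx, Finset.mem_singleton] at hy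
        subst hy; omega
      have hR' : Rel P (i+1) o (insert {x} d) := by
        refine ⟨?_, ?_, ?_, hR.sorted⟩
        · rw [hR.hdone]
          ext C
          simp only [Finset.mem_insert, Finset.mem_filter]
          constructor
          · rintro (rfl | ⟨hC, hlt⟩)
            · exact ⟨hBx ▸ hBP, fun y hy => by
                rw [Finset.mem_singleton] at hy; subst hy; omega⟩
            · exact ⟨hC, fun y hy => by have := hlt y hy; omega⟩
          · rintro ⟨hC, hlt⟩
            by_cases hxC : x ∈ C
            · exact Or.inl ((hCeqB C hC hxC).trans hBx)
            · refine Or.inr ⟨hC, fun y hy => ?_⟩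
              have h1 := hlt y hy
              have h2 : y ≠ x := fun hh => hxC (hh ▸ hy)
              have h3 : y.val ≠ i := fun hh => h2 (Fin.ext hh)
              omega
        · intro j hj
          obtain ⟨C, hC, hy1, ⟨y, hyC, hyi⟩, hf⟩ := hR.mem j hj
          have hCB : C ≠ B := hCneB C hC hy1
          have hxC : x ∉ C := hnotmem C hC hCB
          refine ⟨C, hC, ?_, ⟨y, hyC, ?_⟩, ?_⟩
          · obtain ⟨y1, hy1C, hy1i⟩ := hy1
            exact ⟨y1, hy1C, by omega⟩
          · have : y ≠ x := fun hh => hxC (hh ▸ hyC)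
            have : y.val ≠ i := fun hh => this (Fin.ext hh)
            omega
          · rw [filt_unchanged hx hxC]; exact hf
        · intro C hC ⟨y1, hy1C, hy1i⟩ ⟨y2, hy2C, hy2i⟩
          have hCB : C ≠ B := by
            rintro rfl
            rw [hBx, Finset.mem_singleton] at hy2C
            subst hy2C; omega
          have hxC : x ∉ C := hnotmem C hC hCB
          have hy1i' : y1.val < i := by
            have : y1 ≠ x := fun hh => hxC (hh ▸ hy1C)
            have : y1.val ≠ i := fun hh => this (Fin.ext hh)
            omega
          obtain ⟨j, hj, hf⟩ := hR.idx C hC ⟨y1, hy1C, hy1i'⟩ ⟨y2, hy2C, by omega⟩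
          exact ⟨j, hj, by rw [filt_unchanged hx hxC]; exact hf⟩
      exact finish .sing o (insert {x} d) hstep (doStep_sing mode x o d) hR' (fun h => h)
    · push_neg at hcard
      have hcard2 : 2 ≤ B.card := hcard
      by_cases hmin : ∀ y ∈ B, x ≤ y
      · -- opener
        have hstep : stepOf P x = .op := stepOf_eq_op P hblock hcard2 hmin
        have hBnolow : ∀ y ∈ B, ¬(y.val < i) := fun y hy h => by
          have := Fin.le_def.1 (hmin y hy); omega
        have hBbig : ∃ y ∈ B, i + 1 ≤ y.val := by
          obtain ⟨a, ha, b, hb, hab⟩ := Finset.one_lt_card.1 (by omega : 1 < B.card)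
          rcases eq_or_ne a x with rfl | hax
          · refine ⟨b, hb, ?_⟩
            have h1 := Fin.le_def.1 (hmin b hb)
            have h2 : b.val ≠ i := fun hh => hab (Fin.ext (by omega)).symm
            omega
          · refine ⟨a, ha, ?_⟩
            have h1 := Fin.le_def.1 (hmin a ha)
            have h2 : a.val ≠ i := fun hh => hax (Fin.ext hh)
            omega
        have hBf1 : B.filter (fun y => y.val < i + 1) = {x} := by
          ext y
          simp only [Finset.mem_filter, Finset.mem_singleton]
          constructor
          · rintro ⟨hy, hlt⟩
            have := Fin.le_def.1 (hmin y hy)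
            exact Fin.ext (by omega)
          · rintro rfl; exact ⟨hxB, by omega⟩
        have hCneB : ∀ C ∈ P, (∃ y ∈ C, y.val < i) → C ≠ B := by
          rintro C hC ⟨y, hy, hyi⟩ rfl
          exact hBnolow y hy hyi
        have hR' : Rel P (i+1) (o ++ [{x}]) d := by
          refine ⟨?_, ?_, ?_, ?_⟩
          · rw [hR.hdone]
            ext C
            simp only [Finset.mem_filter]
            constructor
            · rintro ⟨hC, hlt⟩
              exact ⟨hC, fun y hy => by have := hlt y hy; omega⟩
            · rintro ⟨hC, hlt⟩
              refine ⟨hC, fun y hy => ?_⟩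
              by_cases hxC : x ∈ C
              · obtain ⟨z, hz, hzi⟩ := hBbig
                have := hlt z ((hCeqB C hC hxC) ▸ hz)
                omega
              · have h2 : y ≠ x := fun hh => hxC (hh ▸ hy)
                have h3 : y.val ≠ i := fun hh => h2 (Fin.ext hh)
                have := hlt y hy
                omega
          · intro j hj
            rw [List.length_append, List.length_singleton] at hj
            by_cases hjo : j < o.length
            · obtain ⟨C, hC, hy1, ⟨y, hyC, hyi⟩, hf⟩ := hR.mem j hjo
              have hCB : C ≠ B := hCneB C hC hy1
              have hxC : x ∉ C := hnotmem C hC hCB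
              refine ⟨C, hC, ?_, ⟨y, hyC, ?_⟩, ?_⟩
              · obtain ⟨y1, hy1C, hy1i⟩ := hy1
                exact ⟨y1, hy1C, by omega⟩
              · have : y ≠ x := fun hh => hxC (hh ▸ hyC)
                have : y.val ≠ i := fun hh => this (Fin.ext hh)
                omega
              · rw [getD_append_sing, if_pos hjo, filt_unchanged hx hxC]
                exact hf
            · have hjeq : j = o.length := by omega
              subst hjeq
              refine ⟨B, hBP, ⟨x, hxB, by omega⟩, hBbig, ?_⟩
              rw [getD_append_sing, if_neg (lt_irrefl _), if_pos rfl, hBf1]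
          · intro C hC ⟨y1, hy1C, hy1i⟩ hy2
            by_cases hxC : x ∈ C
            · have hCB := hCeqB C hC hxC
              subst hCB
              refine ⟨o.length, by simp, ?_⟩
              rw [getD_append_sing, if_neg (lt_irrefl _), if_pos rfl, hBf1]
            · have hCB : C ≠ B := fun hh => hxC (hh ▸ hxB)
              have hy1i' : y1.val < i := by
                have : y1 ≠ x := fun hh => hxC (hh ▸ hy1C)
                have : y1.val ≠ i := fun hh => this (Fin.ext hh)
                omega
              obtain ⟨y2', hy2C, hy2i⟩ := hy2
              obtain ⟨j, hj, hf⟩ := hR.idx C hC ⟨y1, hy1C, hy1i'⟩ ⟨y2', hy2C, by omega⟩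
              refine ⟨j, by simp; omega, ?_⟩
              rw [getD_append_sing, if_pos hj, filt_unchanged hx hxC]
              exact hf
          · intro j j' hjj hj'
            rw [List.length_append, List.length_singleton] at hj'
            by_cases hjo : j' < o.length
            · simp only [getD_append_sing]
              rw [if_pos (show j < o.length by omega), if_pos hjo]
              exact hR.sorted j j' hjj hjo
            · have hjeq : j' = o.length := by omega
              subst hjeq
              rw [getD_append_sing, getD_append_sing]
              rw [if_pos (show j < o.length by omega)]
              rw [if_neg (lt_irrefl o.length)]
              rw [if_pos (rfl : o.length = o.length)]
              obtain ⟨a, ha⟩ := hR.opens_ne j (by omega)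
              refine ⟨a, ha, fun b hb => ?_⟩
              rw [Finset.mem_singleton] at hb
              subst hb
              exact lt_of_val_lt hx (hR.opens_lt j (by omega) a ha)
        refine finish .op (o ++ [{x}]) d hstep (doStep_op mode x o d) hR' ?_
        intro h
        show validFrom (o.length + 1) ((encode P).drop (i+1))
        rw [List.length_append, List.length_singleton] at h
        exact h
      · -- x is not the opener
        push_neg at hmin
        obtain ⟨ylo, hyloB, hylo⟩ := hmin
        have hylo' : ylo < x := not_le.1 (by exact fun h => absurd h (not_le.2 hylo))
        have hyloi : ylo.val < i := by have := Fin.lt_def.1 hylo'; omega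
        obtain ⟨jB, hjB, hfB⟩ := hR.idx B hBP ⟨ylo, hyloB, hyloi⟩ ⟨x, hxB, by omega⟩
        have hlen0 : 0 < o.length := by omega
        by_cases hmax : ∀ y ∈ B, y ≤ x
        · -- x is the closer
          have hstep : stepOf P x = .cl := stepOf_eq_cl P hblock hcard2 hxB hmax
          have hBle : ∀ y ∈ B, y.val ≤ i := fun y hy => by
            have := Fin.le_def.1 (hmax y hy); omega
          have hCneB' : ∀ C ∈ P, (∃ y ∈ C, i + 1 ≤ y.val) → C ≠ B := by
            rintro C hC ⟨y, hy, hyi⟩ rfl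
            have := hBle y hy; omega
          have hBfull : insert x (B.filter (fun y => y.val < i)) = B := by
            ext y
            simp only [Finset.mem_insert, Finset.mem_filter]
            constructor
            · rintro (rfl | ⟨hy, _⟩)
              · exact hxB
              · exact hy
            · intro hy
              rcases eq_or_ne y x with rfl | hyx
              · exact Or.inl rfl
              · have h1 := hBle y hy
                have h2 : y.val ≠ i := fun hh => hyx (Fin.ext hh)
                exact Or.inr ⟨hy, by omega⟩
          have hdone' : insert B d = P.filter (fun C => ∀ y ∈ C, y.val < i + 1) := by
            rw [hR.hdone]
            ext C
            simp only [Finset.mem_insert, Finset.mem_filter]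
            constructor
            · rintro (rfl | ⟨hC, hlt⟩)
              · exact ⟨hBP, fun y hy => by have := hBle y hy; omega⟩
              · exact ⟨hC, fun y hy => by have := hlt y hy; omega⟩
            · rintro ⟨hC, hlt⟩
              by_cases hxC : x ∈ C
              · exact Or.inl (hCeqB C hC hxC)
              · refine Or.inr ⟨hC, fun y hy => ?_⟩
                have h1 := hlt y hy
                have h2 : y ≠ x := fun hh => hxC (hh ▸ hy)
                have h3 : y.val ≠ i := fun hh => h2 (Fin.ext hh)
                omega
          cases mode with
          | true =>
            simp only [ModeOk, if_pos] at hMode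
            have hjB0 : jB = 0 := by
              by_contra hjBne
              obtain ⟨C0, hC0P, ⟨z1, hz1, hz1i⟩, ⟨z2, hz2, hz2i⟩, hf0⟩ := hR.mem 0 hlen0
              have hC0B : C0 ≠ B := by
                intro hh
                subst hh
                exact hjBne (hR.getD_distinct jB 0 hjB hlen0 (hfB.trans hf0.symm))
              have hc2 : 2 ≤ C0.card := by
                rw [show (2 : ℕ) = 1 + 1 by rfl]
                exact Finset.one_lt_card.2 ⟨z1, hz1, z2, hz2, fun hh => by subst hh; omega⟩
              have hC0ne : C0.Nonempty := ⟨z1, hz1⟩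
              have hBne : B.Nonempty := ⟨x, hxB⟩
              obtain ⟨a, ha, hab⟩ := hR.sorted 0 jB (by omega) hjB
              have haC0 : a ∈ C0 := (Finset.mem_filter.1 (hf0 ▸ ha)).1
              have hminB : B.min' hBne ∈ o.getD jB ∅ := by
                rw [hfB]
                refine Finset.mem_filter.2 ⟨Finset.min'_mem B hBne, ?_⟩
                have h1 : B.min' hBne ≤ ylo := Finset.min'_le B ylo hyloB
                have := Fin.le_def.1 h1
                omega
              have hminlt : C0.min' hC0ne < B.min' hBne :=
                lt_of_le_of_lt (Finset.min'_le C0 a haC0) (hab _ hminB)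
              have hmaxlt := (hMode C0 hC0P B hBP hC0B hc2 hcard2 hC0ne hBne).1 hminlt
              have h1 : B.max' hBne ≤ x := Finset.max'_le B hBne x hmax
              have h2 : x ≤ z2 := Fin.le_def.2 (by omega)
              have h3 : z2 ≤ C0.max' hC0ne := Finset.le_max' C0 z2 hz2
              exact absurd (lt_of_lt_of_le hmaxlt (h1.trans (h2.trans h3))) (lt_irrefl _)
            subst hjB0
            have hdo : doStep true x .cl ⟨o, d⟩ = ⟨o.tail, insert B d⟩ := by
              rw [doStep_cl_fifo, getD_headD, hfB, hBfull]
            have hR' : Rel P (i+1) o.tail (insert B d) := by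
              refine ⟨hdone', ?_, ?_, ?_⟩
              · intro j hj
                rw [List.length_tail] at hj
                obtain ⟨C, hC, hy1, ⟨y, hyC, hyi⟩, hf⟩ := hR.mem (j+1) (by omega)
                have hCB : C ≠ B := by
                  intro hh
                  subst hh
                  have := hR.getD_distinct (j+1) 0 (by omega) hlen0 (hf.trans hfB.symm)
                  omega
                have hxC : x ∉ C := hnotmem C hC hCB
                refine ⟨C, hC, ?_, ⟨y, hyC, ?_⟩, ?_⟩
                · obtain ⟨y1, hy1C, hy1i⟩ := hy1
                  exact ⟨y1, hy1C, by omega⟩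
                · have : y ≠ x := fun hh => hxC (hh ▸ hyC)
                  have : y.val ≠ i := fun hh => this (Fin.ext hh)
                  omega
                · rw [getD_tail, filt_unchanged hx hxC]
                  exact hf
              · intro C hC ⟨y1, hy1C, hy1i⟩ hy2
                have hCB : C ≠ B := hCneB' C hC (by
                  obtain ⟨y2, hy2C, hy2i⟩ := hy2
                  exact ⟨y2, hy2C, hy2i⟩)
                have hxC : x ∉ C := hnotmem C hC hCB
                have hy1i' : y1.val < i := by
                  have : y1 ≠ x := fun hh => hxC (hh ▸ hy1C)
                  have : y1.val ≠ i := fun hh => this (Fin.ext hh)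
                  omega
                obtain ⟨y2, hy2C, hy2i⟩ := hy2
                obtain ⟨j, hj, hf⟩ := hR.idx C hC ⟨y1, hy1C, hy1i'⟩ ⟨y2, hy2C, by omega⟩
                have hjne : j ≠ 0 := by
                  intro hh
                  subst hh
                  exact hCB (hR.block_unique hdisj hlen0 hC hBP hf hfB)
                refine ⟨j - 1, by rw [List.length_tail]; omega, ?_⟩
                rw [getD_tail, show j - 1 + 1 = j by omega, filt_unchanged hx hxC]
                exact hf
              · intro j j' hjj hj'
                rw [List.length_tail] at hj'
                rw [getD_tail, getD_tail]
                exact hR.sorted (j+1) (j'+1) (by omega) (by omega)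
            refine finish .cl o.tail (insert B d) hstep hdo hR' ?_
            intro h
            show 0 < o.length ∧ validFrom (o.length - 1) ((encode P).drop (i+1))
            rw [List.length_tail] at h
            exact ⟨hlen0, h⟩
          | false =>
            simp only [ModeOk, Bool.false_eq_true, if_neg] at hMode
            set L := o.length - 1 with hLdef
            have hjBL : jB = L := by
              by_contra hjBne
              have hjBlt : jB < L := by omega
              obtain ⟨C1, hC1P, ⟨z1, hz1, hz1i⟩, ⟨z2, hz2, hz2i⟩, hf1⟩ := hR.mem L (by omega)
              have hC1B : C1 ≠ B := by
                intro hh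
                subst hh
                exact hjBne (hR.getD_distinct jB L hjB (by omega) (hfB.trans hf1.symm))
              have hC1ne : C1.Nonempty := ⟨z1, hz1⟩
              have hBne : B.Nonempty := ⟨x, hxB⟩
              obtain ⟨a, ha, hab⟩ := hR.sorted jB L hjBlt (by omega)
              have haB : a ∈ B := (Finset.mem_filter.1 (hfB ▸ ha)).1
              have hminC1 : C1.min' hC1ne ∈ o.getD L ∅ := by
                rw [hf1]
                refine Finset.mem_filter.2 ⟨Finset.min'_mem C1 hC1ne, ?_⟩
                have h1 : C1.min' hC1ne ≤ z1 := Finset.min'_le C1 z1 hz1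
                have := Fin.le_def.1 h1
                omega
              have h1 : B.min' hBne < C1.min' hC1ne :=
                lt_of_le_of_lt (Finset.min'_le B a haB) (hab _ hminC1)
              have h2 : C1.min' hC1ne < B.max' hBne := by
                have hv : (C1.min' hC1ne).val < i := by
                  have := hR.opens_lt L (by omega) _ hminC1
                  exact this
                have hxmax : x ≤ B.max' hBne := Finset.le_max' B x hxB
                exact lt_of_lt_of_le (Fin.lt_def.2 (by omega)) hxmax
              have h3 : B.max' hBne < C1.max' hC1ne := by
                have hz2x : z2 ≠ x := by
                  intro hh
                  exact hC1B (hCeqB C1 hC1P (hh ▸ hz2))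
                have hz2i' : i + 1 ≤ z2.val := by
                  have : z2.val ≠ i := fun hh => hz2x (Fin.ext hh)
                  omega
                have hmB : B.max' hBne ≤ x := Finset.max'_le B hBne x hmax
                refine lt_of_le_of_lt hmB (lt_of_lt_of_le (Fin.lt_def.2 (by omega))
                  (Finset.le_max' C1 z2 hz2))
              exact hMode B hBP C1 hC1P hBne hC1ne ⟨h1, h2, h3⟩
            subst hjBL
            have honil : o ≠ [] := by
              intro hh; rw [hh] at hlen0; simp at hlen0
            have hdo : doStep false x .cl ⟨o, d⟩ = ⟨o.dropLast, insert B d⟩ := by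
              rw [doStep_cl_lifo, getD_getLastD _ _ honil, ← hLdef, hfB, hBfull]
            have hR' : Rel P (i+1) o.dropLast (insert B d) := by
              refine ⟨hdone', ?_, ?_, ?_⟩
              · intro j hj
                rw [List.length_dropLast] at hj
                obtain ⟨C, hC, hy1, ⟨y, hyC, hyi⟩, hf⟩ := hR.mem j (by omega)
                have hCB : C ≠ B := by
                  intro hh
                  subst hh
                  have := hR.getD_distinct j L (by omega) (by omega) (hf.trans hfB.symm)
                  omega
                have hxC : x ∉ C := hnotmem C hC hCB
                refine ⟨C, hC, ?_, ⟨y, hyC, ?_⟩, ?_⟩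
                · obtain ⟨y1, hy1C, hy1i⟩ := hy1
                  exact ⟨y1, hy1C, by omega⟩
                · have : y ≠ x := fun hh => hxC (hh ▸ hyC)
                  have : y.val ≠ i := fun hh => this (Fin.ext hh)
                  omega
                · rw [getD_dropLast _ _ _ (by omega), filt_unchanged hx hxC]
                  exact hf
              · intro C hC ⟨y1, hy1C, hy1i⟩ hy2
                have hCB : C ≠ B := hCneB' C hC (by
                  obtain ⟨y2, hy2C, hy2i⟩ := hy2
                  exact ⟨y2, hy2C, hy2i⟩)
                have hxC : x ∉ C := hnotmem C hC hCB
                have hy1i' : y1.val < i := by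
                  have : y1 ≠ x := fun hh => hxC (hh ▸ hy1C)
                  have : y1.val ≠ i := fun hh => this (Fin.ext hh)
                  omega
                obtain ⟨y2, hy2C, hy2i⟩ := hy2
                obtain ⟨j, hj, hf⟩ := hR.idx C hC ⟨y1, hy1C, hy1i'⟩ ⟨y2, hy2C, by omega⟩
                have hjne : j ≠ L := by
                  intro hh
                  subst hh
                  exact hCB (hR.block_unique hdisj (by omega) hC hBP hf hfB)
                refine ⟨j, by rw [List.length_dropLast]; omega, ?_⟩
                rw [getD_dropLast _ _ _ (by omega), filt_unchanged hx hxC]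
                exact hf
              · intro j j' hjj hj'
                rw [List.length_dropLast] at hj'
                rw [getD_dropLast _ _ _ (by omega), getD_dropLast _ _ _ (by omega)]
                exact hR.sorted j j' hjj (by omega)
            refine finish .cl o.dropLast (insert B d) hstep hdo hR' ?_
            intro h
            show 0 < o.length ∧ validFrom (o.length - 1) ((encode P).drop (i+1))
            rw [List.length_dropLast] at h
            exact ⟨hlen0, h⟩
        · -- x is interior
          push_neg at hmax
          obtain ⟨yhi, hyhiB, hyhi⟩ := hmax
          have hyhi' : x < yhi := hyhi
          have hyhii : i + 1 ≤ yhi.val := by have := Fin.lt_def.1 hyhi'; omega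
          have hstep0 : stepOf P x = .ins ((openAt P x).filter
              (fun A => ∃ a ∈ A, ∀ b ∈ B, a < b)).card := by
            have := stepOf_eq_ins P hblock ⟨ylo, hyloB, hylo'⟩ ⟨yhi, hyhiB, hyhi'⟩
            rw [this]
          have hrank : ((openAt P x).filter (fun A => ∃ a ∈ A, ∀ b ∈ B, a < b)).card = jB := by
            refine rank_lemma P o i x hx hR.opens_ne hR.opens_lt hR.sorted hdisj ?_ ?_
              jB hjB B hBP hfB.symm
            · intro j hj
              obtain ⟨C, hC, _, ⟨y, hyC, hyi⟩, hf⟩ := hR.mem j hj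
              exact ⟨C, hC, hf.symm, y, hyC, hyi⟩
            · intro C hC
              obtain ⟨hCP, ⟨z1, hz1, hz1x⟩, ⟨z2, hz2, hz2x⟩⟩ := Finset.mem_filter.1 hC
              obtain ⟨j, hj, hf⟩ := hR.idx C hCP
                ⟨z1, hz1, by have := Fin.lt_def.1 hz1x; omega⟩
                ⟨z2, hz2, by have := Fin.le_def.1 hz2x; omega⟩
              exact ⟨j, hj, hf.symm⟩
          have hstep : stepOf P x = .ins jB := by rw [hstep0, hrank]
          have hgB : (o.set jB (insert x (o.getD jB ∅))).getD jB ∅ =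
              B.filter (fun y => y.val < i + 1) := by
            rw [getD_set', if_pos ⟨rfl, hjB⟩, hfB, filt_succ_mem hx hxB]
          have hR' : Rel P (i+1) (o.set jB (insert x (o.getD jB ∅))) d := by
            have hlens : (o.set jB (insert x (o.getD jB ∅))).length = o.length :=
              List.length_set
            refine ⟨?_, ?_, ?_, ?_⟩
            · rw [hR.hdone]
              ext C
              simp only [Finset.mem_filter]
              constructor
              · rintro ⟨hC, hlt⟩
                exact ⟨hC, fun y hy => by have := hlt y hy; omega⟩
              · rintro ⟨hC, hlt⟩
                refine ⟨hC, fun y hy => ?_⟩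
                by_cases hxC : x ∈ C
                · have := hlt yhi ((hCeqB C hC hxC) ▸ hyhiB)
                  omega
                · have h2 : y ≠ x := fun hh => hxC (hh ▸ hy)
                  have h3 : y.val ≠ i := fun hh => h2 (Fin.ext hh)
                  have := hlt y hy
                  omega
            · intro j hj
              rw [hlens] at hj
              by_cases hjk : j = jB
              · subst hjk
                exact ⟨B, hBP, ⟨x, hxB, by omega⟩, ⟨yhi, hyhiB, hyhii⟩,
                  by rw [hgB]⟩
              · rw [getD_set', if_neg (by tauto)]
                obtain ⟨C, hC, hy1, ⟨y, hyC, hyi⟩, hf⟩ := hR.mem j hj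
                have hCB : C ≠ B := by
                  intro hh
                  subst hh
                  exact hjk (hR.getD_distinct j jB hj hjB (hf.trans hfB.symm))
                have hxC : x ∉ C := hnotmem C hC hCB
                refine ⟨C, hC, ?_, ⟨y, hyC, ?_⟩, ?_⟩
                · obtain ⟨y1, hy1C, hy1i⟩ := hy1
                  exact ⟨y1, hy1C, by omega⟩
                · have : y ≠ x := fun hh => hxC (hh ▸ hyC)
                  have : y.val ≠ i := fun hh => this (Fin.ext hh)
                  omega
                · rw [filt_unchanged hx hxC]
                  exact hf
            · intro C hC ⟨y1, hy1C, hy1i⟩ hy2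
              by_cases hxC : x ∈ C
              · have hCB := hCeqB C hC hxC
                subst hCB
                exact ⟨jB, by rw [List.length_set]; omega, by rw [hgB]⟩
              · have hCB : C ≠ B := fun hh => hxC (hh ▸ hxB)
                have hy1i' : y1.val < i := by
                  have : y1 ≠ x := fun hh => hxC (hh ▸ hy1C)
                  have : y1.val ≠ i := fun hh => this (Fin.ext hh)
                  omega
                obtain ⟨y2, hy2C, hy2i⟩ := hy2
                obtain ⟨j, hj, hf⟩ := hR.idx C hC ⟨y1, hy1C, hy1i'⟩ ⟨y2, hy2C, by omega⟩
                have hjne : j ≠ jB := by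
                  intro hh
                  subst hh
                  exact hCB (hR.block_unique hdisj hj hC hBP hf hfB)
                refine ⟨j, by rw [List.length_set]; omega, ?_⟩
                rw [getD_set', if_neg (by tauto), filt_unchanged hx hxC]
                exact hf
            · intro j j' hjj hj'
              rw [List.length_set] at hj'
              rw [getD_set', getD_set']
              by_cases h : j = jB
              · rw [if_pos ⟨h, hjB⟩, if_neg (by omega)]
                subst h
                obtain ⟨a, ha, hab⟩ := hR.sorted j j' hjj hj'
                exact ⟨a, Finset.mem_insert_of_mem ha, hab⟩
              · rw [if_neg (by tauto)]
                by_cases h' : j' = jB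
                · rw [if_pos ⟨h', hjB⟩]
                  subst h'
                  obtain ⟨a, ha, hab⟩ := hR.sorted j j' hjj hj'
                  refine ⟨a, ha, fun b hb => ?_⟩
                  rcases Finset.mem_insert.1 hb with rfl | hb
                  · exact lt_of_val_lt hx (hR.opens_lt j (by omega) a ha)
                  · exact hab b hb
                · rw [if_neg (by tauto)]
                  exact hR.sorted j j' hjj hj'
          refine finish (.ins jB) (o.set jB (insert x (o.getD jB ∅))) d hstep
            (doStep_ins mode x jB o d) hR' ?_
          intro h
          show jB < o.length ∧ validFrom o.length ((encode P).drop (i+1))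
          rw [List.length_set] at h
          exact ⟨hjB, h⟩


lemma inv_init (mode : Bool) : Inv (n := n) mode 0 [] ∅ := by
  constructor <;> intros <;> simp_all

lemma rel_init (P : Finset (Finset (Fin n))) (hne : ∀ A ∈ P, A.Nonempty) :
    Rel P 0 [] ∅ := by
  refine ⟨?_, ?_, ?_, ?_⟩
  · symm
    rw [Finset.filter_eq_empty_iff]
    intro B hB h
    obtain ⟨y, hy⟩ := hne B hB
    have := h y hy
    omega
  · intro j hj; simp at hj
  · rintro C hC ⟨y, hy, hyi⟩ _
    omega
  · intro j j' hjj hj'; simp at hj'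

lemma decode_eq_outD (mode : Bool) (w : List Step) :
    decode mode n w = outD mode 0 w [] ∅ := by
  rw [decode, outD, List.drop_zero]
  rfl

theorem decode_spec (mode : Bool) (w : List Step) (hv : validFrom 0 w) (hl : w.length = n) :
    IsSetPartition n (decode mode n w) ∧ ModeOk mode (decode mode n w) ∧
    encode (decode mode n w) = w := by
  obtain ⟨hPart, hMode, _, _, _, hK6⟩ :=
    key mode w 0 [] (∅ : Finset (Finset (Fin n))) (by omega) hv (inv_init mode)
  rw [decode_eq_outD]
  refine ⟨hPart, hMode, ?_⟩
  refine List.ext_getElem (by rw [encode_length, hl]) ?_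
  intro j h1 h2
  have hjn : j < n := by rw [encode_length] at h1; exact h1
  have hstep : (encode (outD mode 0 w [] ∅))[j] = stepOf (outD mode 0 w [] ∅) ⟨j, hjn⟩ := by
    simp [encode]
  rw [hstep]
  have := hK6 j (by omega) (by omega)
  have hfin : (⟨0 + j, by omega⟩ : Fin n) = ⟨j, hjn⟩ := Fin.ext (show 0 + j = j by omega)
  rw [hfin] at this
  rw [this, List.get_eq_getElem]

theorem encode_spec (mode : Bool) (P : Finset (Finset (Fin n)))
    (hPart : IsSetPartition n P) (hMode : ModeOk mode P) :
    validFrom 0 (encode P) ∧ (encode P).length = n ∧ decode mode n (encode P) = P := by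
  obtain ⟨h1, h2⟩ := key2 mode P hPart.1 hPart.2.1 hPart.2.2 hMode n 0 [] ∅ (by omega)
    (rel_init P hPart.1)
  rw [List.drop_zero] at h1 h2
  refine ⟨h1, encode_length P, ?_⟩
  rw [decode]
  exact h2

end MonNov

/-- The number of monotone set partitions of `[n]` equals the number of
non-overlapping set partitions of `[n]` (the `n`-th Bessel number). -/
theorem monotone_eq_nonoverlapping (n : ℕ) :
    {P : Finset (Finset (Fin n)) | IsMonotonePartition n P}.ncard =
      {P : Finset (Finset (Fin n)) | IsNonOverlappingPartition n P}.ncard := by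
  classical
  set V : Set (List MonNov.Step) := {w | MonNov.validFrom 0 w ∧ w.length = n} with hV
  have himg : ∀ mode : Bool,
      (MonNov.decode mode n) '' V = {P | IsSetPartition n P ∧ MonNov.ModeOk mode P} := by
    intro mode
    ext P
    constructor
    · rintro ⟨w, ⟨hv, hl⟩, rfl⟩
      obtain ⟨h1, h2, _⟩ := MonNov.decode_spec mode w hv hl
      exact ⟨h1, h2⟩
    · rintro ⟨h1, h2⟩
      obtain ⟨hv, hl, hdec⟩ := MonNov.encode_spec mode P h1 h2
      exact ⟨MonNov.encode P, ⟨hv, hl⟩, hdec⟩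
  have hinj : ∀ mode : Bool, Set.InjOn (MonNov.decode mode n) V := by
    intro mode w hw w' hw' heq
    obtain ⟨_, _, h3⟩ := MonNov.decode_spec mode w hw.1 hw.2
    obtain ⟨_, _, h3'⟩ := MonNov.decode_spec mode w' hw'.1 hw'.2
    rw [← h3, ← h3', heq]
  have hM : {P : Finset (Finset (Fin n)) | IsMonotonePartition n P} =
      {P | IsSetPartition n P ∧ MonNov.ModeOk true P} := rfl
  have hN : {P : Finset (Finset (Fin n)) | IsNonOverlappingPartition n P} =
      {P | IsSetPartition n P ∧ MonNov.ModeOk false P} := rfl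
  rw [hM, hN, ← himg true, ← himg false,
    Set.ncard_image_of_injOn (hinj true), Set.ncard_image_of_injOn (hinj false)]
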